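/- arXiv:2307.16501 — 10 statements merged into one kernel-verified Lean document; each statement's English description precedes it below -/
import Mathlib

section
/- Let S be an affine semigroup in ℕ^d minimally generated by A = {a_1, ..., a_e}, let I_A ⊆ k[x_1,...,x_e] be the toric ideal (kernel of x_i ↦ t^{a_i}), let δ ⊆ {1,...,d}, and let ≺ be a monomial order. Let Q be the set of monomials in the variables {x_i : i ∉ δ} that do not lie in the initial ideal in_≺(I_A + ⟨x_i : i ∈ δ⟩). Then the map Q → ⋂_{i ∈ δ} Ap(S, a_i) sending x^u to ∑_{i ∉ δ} u_i a_i is a bijection. -/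
open MvPolynomial

noncomputable section

/-- The toric ideal of the family `a : Fin e → ℕ^d`: the kernel of
`k[x_1,…,x_e] → k[t_1,…,t_d]`, `x_i ↦ t^{a_i}`. -/
def toricIdeal (k : Type*) [Field k] {e d : ℕ} (a : Fin e → (Fin d → ℕ)) :
    Ideal (MvPolynomial (Fin e) k) :=
  RingHom.ker (MvPolynomial.aeval
    (fun i => AddMonoidAlgebra.single (a i) (1 : k)) :
      MvPolynomial (Fin e) k →ₐ[k] AddMonoidAlgebra k (Fin d → ℕ)).toRingHom

/-- The leading exponent of a polynomial with respect to a monomial order. -/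
def leadExp {e : ℕ} {k : Type*} [Field k] (m : MonomialOrder (Fin e))
    (p : MvPolynomial (Fin e) k) : Fin e →₀ ℕ :=
  m.toSyn.symm (p.support.sup m.toSyn)

/-- The initial ideal of `J` with respect to the monomial order `m`: the ideal generated by
the leading monomials of the nonzero elements of `J`. -/
def initialIdeal {e : ℕ} {k : Type*} [Field k] (m : MonomialOrder (Fin e))
    (J : Ideal (MvPolynomial (Fin e) k)) : Ideal (MvPolynomial (Fin e) k) :=
  Ideal.span {q | ∃ p ∈ J, p ≠ 0 ∧ q = monomial (leadExp m p) (1 : k)}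

section Aux

variable {k : Type*} [Field k] {e d : ℕ}

/-- The weight of an exponent vector. -/
def piw (a : Fin e → (Fin d → ℕ)) (u : Fin e →₀ ℕ) : Fin d → ℕ := ∑ i, u i • a i

lemma piw_add (a : Fin e → (Fin d → ℕ)) (u v : Fin e →₀ ℕ) :
    piw a (u + v) = piw a u + piw a v := by
  simp [piw, add_smul, Finset.sum_add_distrib]

lemma piw_single (a : Fin e → (Fin d → ℕ)) (i : Fin e) : piw a (Finsupp.single i 1) = a i := by
  simp [piw, Finsupp.single_apply, apply_ite (· • a i)]

lemma aeval_monomial_single (a : Fin e → (Fin d → ℕ)) (u : Fin e →₀ ℕ) (c : k) :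
    (MvPolynomial.aeval (fun i => AddMonoidAlgebra.single (a i) (1 : k)))
      (monomial u c) = AddMonoidAlgebra.single (piw a u) c := by
  rw [aeval_monomial]
  have h1 : (u.prod fun i n => (AddMonoidAlgebra.single (a i) (1 : k)) ^ n)
      = AddMonoidAlgebra.single (piw a u) 1 := by
    rw [Finsupp.prod]
    have : ∀ i ∈ u.support, (AddMonoidAlgebra.single (a i) (1 : k)) ^ (u i)
        = AddMonoidAlgebra.single (u i • a i) 1 := by
      intro i _; rw [AddMonoidAlgebra.single_pow, one_pow]
    rw [Finset.prod_congr rfl this]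
    rw [AddMonoidAlgebra.prod_single]
    congr 1
    · rw [piw, Finset.sum_subset (Finset.subset_univ _)]
      intro i _ hi
      simp [Finsupp.notMem_support_iff.mp hi]
    · simp
  rw [h1]
  have h2 : (algebraMap k (AddMonoidAlgebra k (Fin d → ℕ))) c
      = AddMonoidAlgebra.single 0 c := by
    rw [AddMonoidAlgebra.coe_algebraMap]; simp
  rw [h2, AddMonoidAlgebra.single_mul_single, zero_add, mul_one]

lemma aeval_eq_sum (a : Fin e → (Fin d → ℕ)) (p : MvPolynomial (Fin e) k) :
    (MvPolynomial.aeval (fun i => AddMonoidAlgebra.single (a i) (1 : k))) p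
      = ∑ v ∈ p.support, AddMonoidAlgebra.single (piw a v) (coeff v p) := by
  conv_lhs => rw [p.as_sum]
  rw [map_sum]
  exact Finset.sum_congr rfl fun v _ => aeval_monomial_single a v _

lemma coeff_aeval (a : Fin e → (Fin d → ℕ)) (p : MvPolynomial (Fin e) k) (b : Fin d → ℕ) :
    ((MvPolynomial.aeval (fun i => AddMonoidAlgebra.single (a i) (1 : k))) p).coeff b
      = ∑ v ∈ p.support.filter (fun v => piw a v = b), coeff v p := by
  classical
  rw [aeval_eq_sum, AddMonoidAlgebra.coeff_sum, Finsupp.finset_sum_apply, Finset.sum_filter]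
  refine Finset.sum_congr rfl fun v _ => ?_
  rw [AddMonoidAlgebra.coeff_single_apply]

lemma piw_mem_closure (a : Fin e → (Fin d → ℕ)) (u : Fin e →₀ ℕ) :
    piw a u ∈ AddSubmonoid.closure (Set.range a) := by
  refine sum_mem fun i _ => AddSubmonoid.nsmul_mem _ ?_ _
  exact AddSubmonoid.subset_closure (Set.mem_range_self i)

lemma exists_piw (a : Fin e → (Fin d → ℕ)) {s : Fin d → ℕ}
    (hs : s ∈ AddSubmonoid.closure (Set.range a)) : ∃ u, piw a u = s := by
  induction hs using AddSubmonoid.closure_induction with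
  | mem x hx =>
    obtain ⟨i, rfl⟩ := hx
    exact ⟨Finsupp.single i 1, piw_single a i⟩
  | zero => exact ⟨0, by simp [piw]⟩
  | add x y _ _ hx hy =>
    obtain ⟨u, rfl⟩ := hx; obtain ⟨v, rfl⟩ := hy
    exact ⟨u + v, piw_add a u v⟩

/-- If a coefficient of the image of `p` is nonzero at `b`, then `b` is in the semigroup. -/
lemma mem_closure_of_coeff_aeval_ne (a : Fin e → (Fin d → ℕ)) {p : MvPolynomial (Fin e) k}
    {b : Fin d → ℕ}
    (h : ((MvPolynomial.aeval (fun i => AddMonoidAlgebra.single (a i) (1 : k))) p).coeff b ≠ 0) :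
    b ∈ AddSubmonoid.closure (Set.range a) := by
  rw [coeff_aeval] at h
  obtain ⟨v, hv⟩ := Finset.exists_ne_zero_of_sum_ne_zero h
  obtain ⟨-, hv2⟩ := Finset.mem_filter.mp hv.1
  exact hv2 ▸ piw_mem_closure a v

variable (m : MonomialOrder (Fin e))

lemma leadExp_mem_support {p : MvPolynomial (Fin e) k} (hp : p ≠ 0) :
    leadExp m p ∈ p.support := by
  obtain ⟨v, hv, hsup⟩ := p.support.exists_mem_eq_sup
    (Finset.nonempty_iff_ne_empty.mpr (mt support_eq_empty.mp hp)) m.toSyn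
  rw [leadExp, hsup, AddEquiv.symm_apply_apply]
  exact hv

lemma le_leadExp {p : MvPolynomial (Fin e) k} {v : Fin e →₀ ℕ} (hv : v ∈ p.support) :
    m.toSyn v ≤ m.toSyn (leadExp m p) := by
  rw [leadExp, AddEquiv.apply_symm_apply]
  exact Finset.le_sup hv

lemma leadExp_monomial {u : Fin e →₀ ℕ} {c : k} (hc : c ≠ 0) :
    leadExp m (monomial u c) = u := by
  classical
  rw [leadExp, support_monomial, if_neg hc, Finset.sup_singleton, AddEquiv.symm_apply_apply]

lemma leadExp_monomial_mul {w : Fin e →₀ ℕ} {p : MvPolynomial (Fin e) k} (hp : p ≠ 0) :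
    leadExp m (monomial w (1 : k) * p) = w + leadExp m p := by
  classical
  have hcoeff : coeff (w + leadExp m p) (monomial w (1 : k) * p) = coeff (leadExp m p) p := by
    rw [coeff_monomial_mul]
    ring
  have hmem : w + leadExp m p ∈ (monomial w (1 : k) * p).support := by
    rw [mem_support_iff, hcoeff]
    exact mem_support_iff.mp (leadExp_mem_support m hp)
  have hne : monomial w (1 : k) * p ≠ 0 := by
    intro h
    rw [h] at hmem
    simp at hmem
  apply m.toSyn.injective
  apply le_antisymm
  · have h1 := leadExp_mem_support m hne
    have h2 := support_mul (monomial w (1:k)) p h1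
    rw [Finset.mem_add] at h2
    obtain ⟨c, hc, c', hc', hsum⟩ := h2
    rw [support_monomial, if_neg (one_ne_zero : (1:k) ≠ 0), Finset.mem_singleton] at hc
    subst hc
    rw [← hsum, map_add, map_add]
    exact add_le_add le_rfl (le_leadExp m hc')
  · exact le_leadExp m hmem

lemma span_X_coeff (a : Fin e → (Fin d → ℕ)) (δ : Finset (Fin e))
    {g : MvPolynomial (Fin e) k}
    (hg : g ∈ Ideal.span ((fun i => X i) '' (δ : Set (Fin e))))
    (b : Fin d → ℕ)
    (hb : ((MvPolynomial.aeval (fun i => AddMonoidAlgebra.single (a i) (1 : k))) g).coeff b ≠ 0) :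
    ∃ i ∈ δ, ∃ s ∈ AddSubmonoid.closure (Set.range a), b = a i + s := by
  classical
  set φ := (MvPolynomial.aeval (fun i => AddMonoidAlgebra.single (a i) (1 : k)) :
      MvPolynomial (Fin e) k →ₐ[k] AddMonoidAlgebra k (Fin d → ℕ))
  induction hg using Submodule.span_induction generalizing b with
  | mem x hx =>
    obtain ⟨i, hi, rfl⟩ := hx
    have : φ (X i) = AddMonoidAlgebra.single (a i) 1 := by
      simp [φ]
    rw [this] at hb
    rw [AddMonoidAlgebra.coeff_single_apply] at hb
    have hba : b = a i := by
      by_contra h; rw [if_neg (fun h' => h h'.symm)] at hb; exact hb rfl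
    exact ⟨i, hi, 0, AddSubmonoid.zero_mem _, by rw [hba, add_zero]⟩
  | zero => simp at hb
  | add x y hx hy ihx ihy =>
    rw [map_add, AddMonoidAlgebra.coeff_add, Finsupp.add_apply] at hb
    by_cases h : (φ x).coeff b = 0
    · refine ihy b fun h' => hb ?_
      rw [h, h', add_zero]
    · exact ihx b h
  | smul r x hx ih =>
    rw [smul_eq_mul, map_mul] at hb
    have hsupp : b ∈ ((φ r) * (φ x)).coeff.support := Finsupp.mem_support_iff.mpr hb
    have h2 := AddMonoidAlgebra.support_coeff_mul_subset (φ r) (φ x) hsupp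
    rw [Finset.mem_add] at h2
    obtain ⟨c, hc, c', hc', rfl⟩ := h2
    obtain ⟨i, hi, s, hs, hcs⟩ := ih c' (Finsupp.mem_support_iff.mp hc')
    refine ⟨i, hi, c + s, ?_, ?_⟩
    · exact AddSubmonoid.add_mem _
        (mem_closure_of_coeff_aeval_ne a (Finsupp.mem_support_iff.mp hc)) hs
    · rw [hcs]; abel

end Aux

/-- let `S` be the affine semigroup generated by `a_1,…,a_e ∈ ℕ^d`
(with `E = {a_1,…,a_d}` the extremal rays), `δ ⊆ {1,…,d}`, `≺` a monomial order and
`Q` the set of (exponents of) monomials in the variables `{x_i : i ∉ δ}` not lying in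
`in_≺(I_A + ⟨x_i : i ∈ δ⟩)`.  Then `x^u ↦ ∑_{i ∉ δ} u_i a_i` is a bijection from `Q`
onto `⋂_{i ∈ δ} Ap(S, a_i)`. -/
theorem aperySet_groebner_bijection (k : Type*) [Field k] {e d : ℕ} (hde : d ≤ e)
    (a : Fin e → (Fin d → ℕ)) (m : MonomialOrder (Fin e))
    (δ : Finset (Fin e)) (hδ : ∀ i ∈ δ, (i : ℕ) < d) :
    Set.BijOn (fun u : Fin e →₀ ℕ => ∑ i ∈ δᶜ, u i • a i)
      {u : Fin e →₀ ℕ | (∀ i ∈ δ, u i = 0) ∧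
        (monomial u (1 : k)) ∉
          initialIdeal m (toricIdeal k a ⊔ Ideal.span ((fun i => X i) '' ↑δ))}
      {b | b ∈ AddSubmonoid.closure (Set.range a) ∧
        ∀ i ∈ δ, ¬ ∃ s ∈ AddSubmonoid.closure (Set.range a), b = a i + s} := by
  classical
  set φ := (MvPolynomial.aeval (fun i => AddMonoidAlgebra.single (a i) (1 : k)) :
      MvPolynomial (Fin e) k →ₐ[k] AddMonoidAlgebra k (Fin d → ℕ)) with hφdef
  set J := toricIdeal k a ⊔ Ideal.span ((fun i => X i) '' (δ : Set (Fin e))) with hJdef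
  -- the map agrees with `piw` on the domain
  have hmap : ∀ u : Fin e →₀ ℕ, (∀ i ∈ δ, u i = 0) →
      ∑ i ∈ δᶜ, u i • a i = piw a u := by
    intro u h0
    rw [piw, Finset.sum_subset (Finset.subset_univ _)]
    intro i _ hi
    rw [h0 i (by simpa using hi), zero_smul]
  have htoric : ∀ p : MvPolynomial (Fin e) k, φ p = 0 → p ∈ toricIdeal k a := by
    intro p hp
    exact hp
  -- a monomial lying in J has its own monomial in the initial ideal
  have hmono_init : ∀ u : Fin e →₀ ℕ, (monomial u (1 : k)) ∈ J →
      (monomial u (1 : k)) ∈ initialIdeal m J := by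
    intro u hu
    refine Ideal.subset_span ⟨monomial u (1:k), hu, ?_, ?_⟩
    · rw [Ne, monomial_eq_zero]; exact one_ne_zero
    · rw [leadExp_monomial m (one_ne_zero : (1:k) ≠ 0)]
  refine ⟨?_, ?_, ?_⟩
  · -- MapsTo
    rintro u ⟨h0, hinit⟩
    simp only [Set.mem_setOf_eq]
    rw [hmap u h0]
    refine ⟨piw_mem_closure a u, ?_⟩
    rintro i hi ⟨s, hsS, hbs⟩
    obtain ⟨v, rfl⟩ := exists_piw a hsS
    -- the binomial x^u - x_i x^v lies in the toric ideal
    have hXi : φ (X i * monomial v (1:k)) = AddMonoidAlgebra.single (piw a u) 1 := by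
      rw [map_mul, aeval_X, aeval_monomial_single, AddMonoidAlgebra.single_mul_single,
        one_mul, ← hbs]
    have hbin : monomial u (1:k) - X i * monomial v (1:k) ∈ toricIdeal k a := by
      apply htoric
      rw [map_sub, hXi, aeval_monomial_single, sub_self]
    have hXiJ : X i * monomial v (1:k) ∈ J := by
      refine le_sup_right (α := Ideal (MvPolynomial (Fin e) k)) ?_
      exact Ideal.mul_mem_right _ _ (Ideal.subset_span ⟨i, hi, rfl⟩)
    have huJ : monomial u (1:k) ∈ J := by
      have := J.add_mem (le_sup_left (α := Ideal (MvPolynomial (Fin e) k)) hbin) hXiJ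
      simpa using this
    exact hinit (hmono_init u huJ)
  · -- InjOn
    rintro u ⟨hu0, huinit⟩ v ⟨hv0, hvinit⟩ heq
    by_contra hne
    replace heq : piw a u = piw a v := by
      rw [← hmap u hu0, ← hmap v hv0]; exact heq
    set p := monomial u (1:k) - monomial v (1:k) with hp
    have hpJ : p ∈ J := by
      refine le_sup_left (α := Ideal (MvPolynomial (Fin e) k)) (htoric p ?_)
      rw [hp, map_sub, aeval_monomial_single, aeval_monomial_single, heq, sub_self]
    have hpne : p ≠ 0 := by
      intro h
      have : coeff u p = 0 := by rw [h, coeff_zero]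
      rw [hp, coeff_sub, coeff_monomial, coeff_monomial, if_pos rfl,
        if_neg (fun h' => hne h'.symm), sub_zero] at this
      exact one_ne_zero this
    have hlead : leadExp m p ∈ ({u} : Finset (Fin e →₀ ℕ)) ∪ {v} := by
      have h1 := leadExp_mem_support m hpne
      have h2 := support_sub (σ := Fin e) (monomial u (1:k)) (monomial v (1:k)) (hp ▸ h1)
      rw [support_monomial, if_neg (one_ne_zero : (1:k) ≠ 0),
        support_monomial, if_neg (one_ne_zero : (1:k) ≠ 0)] at h2
      exact h2
    rw [Finset.mem_union, Finset.mem_singleton, Finset.mem_singleton] at hlead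
    rcases hlead with h | h
    · exact huinit (h ▸ Ideal.subset_span ⟨p, hpJ, hpne, rfl⟩)
    · exact hvinit (h ▸ Ideal.subset_span ⟨p, hpJ, hpne, rfl⟩)
  · -- SurjOn
    rintro b ⟨hbS, hbAp⟩
    obtain ⟨u₀, hu₀⟩ := exists_piw a hbS
    -- pick u with piw a u = b minimizing the monomial order
    obtain ⟨x, hxT, hxmin⟩ := (m.wf.wf).has_min (m.toSyn '' {u | piw a u = b})
      ⟨m.toSyn u₀, u₀, hu₀, rfl⟩
    obtain ⟨u, hub, rfl⟩ := hxT
    have hmin : ∀ v : Fin e →₀ ℕ, piw a v = b → ¬ m.toSyn v < m.toSyn u := by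
      intro v hv
      exact hxmin (m.toSyn v) ⟨v, hv, rfl⟩
    -- u vanishes on δ
    have h0 : ∀ i ∈ δ, u i = 0 := by
      intro i hi
      by_contra hui
      have hle : Finsupp.single i 1 ≤ u := by
        rw [Finsupp.single_le_iff]
        exact Nat.one_le_iff_ne_zero.mpr hui
      have : b = a i + piw a (u - Finsupp.single i 1) := by
        rw [← hub, ← piw_single a i, ← piw_add]
        congr 1
        rw [add_tsub_cancel_of_le hle]
      exact hbAp i hi ⟨piw a (u - Finsupp.single i 1), piw_mem_closure a _, this⟩
    -- the monomial of u is a standard monomial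
    have hQ : (monomial u (1:k)) ∉ initialIdeal m J := by
      intro hin
      have hset : {q | ∃ p ∈ J, p ≠ 0 ∧ q = monomial (leadExp m p) (1 : k)}
          = (fun s => monomial s (1:k)) '' {w | ∃ p ∈ J, p ≠ 0 ∧ w = leadExp m p} := by
        ext q
        constructor
        · rintro ⟨p, h1, h2, h3⟩
          exact ⟨leadExp m p, ⟨p, h1, h2, rfl⟩, h3.symm⟩
        · rintro ⟨w, ⟨p, h1, h2, h3⟩, h4⟩
          exact ⟨p, h1, h2, by rw [← h4, h3]⟩
      rw [initialIdeal, hset, mem_ideal_span_monomial_image] at hin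
      obtain ⟨w', ⟨p, hpJ, hpne, rfl⟩, hle⟩ := hin u (by
        rw [mem_support_iff, coeff_monomial, if_pos rfl]; exact one_ne_zero)
      -- q = x^(u - lead p) * p has leading exponent u
      set q := monomial (u - leadExp m p) (1:k) * p with hq
      have hqJ : q ∈ J := Ideal.mul_mem_left _ _ hpJ
      have hqne : q ≠ 0 := by
        apply mul_ne_zero _ hpne
        rw [Ne, monomial_eq_zero]; exact one_ne_zero
      have hqlead : leadExp m q = u := by
        rw [hq, leadExp_monomial_mul m hpne, tsub_add_cancel_of_le hle]
      -- decompose q into toric part and span part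
      obtain ⟨f, hf, g, hg, hfg⟩ := Submodule.mem_sup.mp (hJdef ▸ hqJ)
      have hf0 : φ f = 0 := hf
      have hφq : φ q = φ g := by
        rw [← hfg, map_add, hf0, zero_add]
      -- either there is another monomial of q with the same weight, or
      -- the coefficient at b of φ q is nonzero
      by_cases hcase : ∃ v ∈ q.support.filter (fun v => piw a v = b), v ≠ u
      · obtain ⟨v, hv, hvu⟩ := hcase
        obtain ⟨hv1, hv2⟩ := Finset.mem_filter.mp hv
        refine hmin v hv2 (lt_of_le_of_ne ?_ ?_)
        · rw [← hqlead]; exact le_leadExp m hv1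
        · intro h
          exact hvu (m.toSyn.injective h)
      · push_neg at hcase
        have hufil : q.support.filter (fun v => piw a v = b) = {u} := by
          apply Finset.eq_singleton_iff_unique_mem.mpr
          refine ⟨Finset.mem_filter.mpr ⟨hqlead ▸ leadExp_mem_support m hqne, hub⟩, hcase⟩
        have hcb : (φ q).coeff b ≠ 0 := by
          rw [coeff_aeval, hufil, Finset.sum_singleton]
          rw [← mem_support_iff, ← hqlead]
          exact leadExp_mem_support m hqne
        rw [hφq] at hcb
        obtain ⟨i, hi, s, hsS, hbs⟩ := span_X_coeff a δ hg b hcb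
        exact hbAp i hi ⟨s, hsS, hbs⟩
    have hub' : piw a u = b := hub
    exact ⟨u, ⟨h0, hQ⟩, (hmap u h0).trans hub'⟩

end
end

section
/- Let S be an affine semigroup in ℕ^d minimally generated by A = {a_1,...,a_e}, e ≥ 3, with toric ideal I_A ⊆ k[x_1,...,x_e], and let i ≠ j. Then x_j is a zero-divisor on k[x]/(I_A + ⟨x_i⟩) if and only if there exists b ∈ Ap(S, a_i) such that a_j + b ∉ Ap(S, a_i). -/
open MvPolynomial

noncomputable section

namespace XjAux

variable (k : Type*) [Field k] {e d : ℕ}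

/-- The semigroup algebra evaluation map. -/
def phi (a : Fin e → (Fin d → ℕ)) :
    MvPolynomial (Fin e) k →ₐ[k] AddMonoidAlgebra k (Fin d → ℕ) :=
  MvPolynomial.aeval (fun i => AddMonoidAlgebra.single (a i) (1 : k))

variable {k}

lemma exists_rep (a : Fin e → (Fin d → ℕ)) {s : Fin d → ℕ}
    (hs : s ∈ AddSubmonoid.closure (Set.range a)) :
    ∃ g, phi k a g = AddMonoidAlgebra.single s (1 : k) := by
  induction hs using AddSubmonoid.closure_induction with
  | mem x hx =>
      obtain ⟨n, rfl⟩ := hx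
      exact ⟨X n, by simp [phi]⟩
  | zero => exact ⟨1, by rw [map_one, AddMonoidAlgebra.one_def]⟩
  | add x y _ _ hx hy =>
      obtain ⟨g, hg⟩ := hx
      obtain ⟨g', hg'⟩ := hy
      exact ⟨g * g', by
        simp [map_mul, hg, hg', AddMonoidAlgebra.single_mul_single]⟩

lemma support_subset (a : Fin e → (Fin d → ℕ)) (f : MvPolynomial (Fin e) k) :
    ∀ b ∈ (phi k a f).coeff.support, b ∈ AddSubmonoid.closure (Set.range a) := by
  induction f using MvPolynomial.induction_on with
  | C c =>
      intro b hb
      have h1 : phi k a (C c) = c • (1 : AddMonoidAlgebra k (Fin d → ℕ)) := by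
        simp [phi, Algebra.smul_def]
      rw [h1, AddMonoidAlgebra.coeff_smul] at hb
      have := Finsupp.support_smul hb
      have := AddMonoidAlgebra.support_coeff_one_subset this
      simp only [Finset.mem_zero] at this
      subst this
      exact zero_mem _
  | add p q hp hq =>
      intro b hb
      rw [map_add, AddMonoidAlgebra.coeff_add] at hb
      rcases Finset.mem_union.mp (Finsupp.support_add hb) with h | h
      · exact hp b h
      · exact hq b h
  | mul_X p n hp =>
      intro b hb
      rw [map_mul] at hb
      have hb' := AddMonoidAlgebra.support_coeff_mul_subset _ _ hb
      rw [Finset.mem_add] at hb'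
      obtain ⟨x, hx, y, hy, rfl⟩ := hb'
      have hx' := hp x hx
      have : phi k a (X n) = AddMonoidAlgebra.single (a n) (1 : k) := by simp [phi]
      rw [this] at hy
      have := Finsupp.support_single_subset hy
      simp only [Finset.mem_singleton] at this
      subst this
      exact add_mem hx' (AddSubmonoid.subset_closure ⟨n, rfl⟩)

lemma exists_shift (a : Fin e → (Fin d → ℕ)) (i : Fin e) {b : Fin d → ℕ}
    (h : ∃ s ∈ AddSubmonoid.closure (Set.range a), b = a i + s) :
    ∃ g, phi k a (X i * g) = AddMonoidAlgebra.single b (1 : k) := by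
  obtain ⟨s, hs, rfl⟩ := h
  obtain ⟨g, hg⟩ := exists_rep (k := k) a hs
  refine ⟨g, ?_⟩
  rw [map_mul, hg]
  have : phi k a (X i) = AddMonoidAlgebra.single (a i) (1 : k) := by simp [phi]
  rw [this, AddMonoidAlgebra.single_mul_single, one_mul]

lemma mem_J_iff (a : Fin e → (Fin d → ℕ)) (i : Fin e) (f : MvPolynomial (Fin e) k) :
    f ∈ toricIdeal k a ⊔ Ideal.span {X i} ↔
      ∀ b ∈ (phi k a f).coeff.support, ∃ s ∈ AddSubmonoid.closure (Set.range a), b = a i + s := by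
  constructor
  · intro hf
    obtain ⟨g, hg, h, hh, rfl⟩ := Submodule.mem_sup.mp hf
    obtain ⟨c, rfl⟩ := Ideal.mem_span_singleton.mp hh
    have hg0 : phi k a g = 0 := hg
    intro b hb
    rw [map_add, hg0, zero_add, map_mul] at hb
    have hXi : phi k a (X i) = AddMonoidAlgebra.single (a i) (1 : k) := by simp [phi]
    rw [hXi, AddMonoidAlgebra.support_coeff_single_mul _ _ (fun y => by simp) _] at hb
    obtain ⟨x, hx, rfl⟩ := Finset.mem_map.mp hb
    exact ⟨x, support_subset a c x hx, rfl⟩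
  · intro hsup
    classical
    set q := phi k a f with hq
    let G : (Fin d → ℕ) → MvPolynomial (Fin e) k := fun b =>
      if h : ∃ s ∈ AddSubmonoid.closure (Set.range a), b = a i + s then
        Classical.choose (exists_shift a i h) else 0
    have hG : ∀ b ∈ q.coeff.support, phi k a (X i * G b) = AddMonoidAlgebra.single b (1 : k) := by
      intro b hb
      have h := hsup b hb
      simp only [G, dif_pos h]
      exact Classical.choose_spec (exists_shift a i h)
    set f' : MvPolynomial (Fin e) k := ∑ b ∈ q.coeff.support, C (q.coeff b) * (X i * G b) with hf'
    have hφf' : phi k a f' = q := by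
      rw [hf', map_sum]
      have : ∀ b ∈ q.coeff.support, phi k a (C (q.coeff b) * (X i * G b)) =
          AddMonoidAlgebra.single b (q.coeff b) := by
        intro b hb
        rw [map_mul, hG b hb]
        have hc : phi k a (C (q.coeff b)) = AddMonoidAlgebra.single 0 (q.coeff b) := by
          simp [phi]
        rw [hc, AddMonoidAlgebra.single_mul_single, zero_add, mul_one]
      rw [Finset.sum_congr rfl this]
      simpa [Finsupp.sum] using AddMonoidAlgebra.sum_coeff_single q
    have h1 : f - f' ∈ toricIdeal k a := by
      show phi k a (f - f') = 0
      rw [map_sub, hφf']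
      exact sub_self q
    have h2 : f' ∈ Ideal.span {X i} := by
      rw [hf']
      refine Ideal.sum_mem _ fun b _ => Ideal.mem_span_singleton.mpr ⟨C (q.coeff b) * G b, by ring⟩
    have := Submodule.add_mem _ (Ideal.mem_sup_left h1) (Ideal.mem_sup_right h2)
    simpa using this

end XjAux

open XjAux in
/-- for `e ≥ 3` and `i ≠ j`, `x_j` is a zero-divisor on
`k[x]/(I_A + ⟨x_i⟩)` if and only if there exists `b ∈ Ap(S, a_i)` with
`a_j + b ∉ Ap(S, a_i)`. -/
theorem xj_zeroDivisor_iff_apery (k : Type*) [Field k] {e d : ℕ} (he : 3 ≤ e)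
    (a : Fin e → (Fin d → ℕ)) (ha : Set.range a ⊆ {x | x ≠ 0})
    (S : AddSubmonoid (Fin d → ℕ)) (hS : S = AddSubmonoid.closure (Set.range a))
    (i j : Fin e) (hij : i ≠ j) :
    (∃ s : MvPolynomial (Fin e) k ⧸ (toricIdeal k a ⊔ Ideal.span {X i}),
        s ≠ 0 ∧ Ideal.Quotient.mk (toricIdeal k a ⊔ Ideal.span {X i}) (X j) * s = 0) ↔
      (∃ b, (b ∈ S ∧ ¬ ∃ s ∈ S, b = a i + s) ∧
        ¬ (a j + b ∈ S ∧ ¬ ∃ s ∈ S, a j + b = a i + s)) := by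
  subst hS
  set J := toricIdeal k a ⊔ Ideal.span {X i} with hJ
  constructor
  · rintro ⟨s, hs0, hmul⟩
    obtain ⟨f, rfl⟩ := Ideal.Quotient.mk_surjective s
    have hfJ : f ∉ J := fun h => hs0 (Ideal.Quotient.eq_zero_iff_mem.mpr h)
    have hXjf : X j * f ∈ J := by
      rw [← map_mul] at hmul
      exact Ideal.Quotient.eq_zero_iff_mem.mp hmul
    have hfn : ¬ ∀ b ∈ (phi k a f).coeff.support,
        ∃ s ∈ AddSubmonoid.closure (Set.range a), b = a i + s :=
      fun h => hfJ ((mem_J_iff a i f).mpr h)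
    push_neg at hfn
    obtain ⟨b, hb, hnb⟩ := hfn
    have hXj' := (mem_J_iff a i (X j * f)).mp hXjf
    have hmem : a j + b ∈ (phi k a (X j * f)).coeff.support := by
      rw [map_mul]
      have hX : phi k a (X j) = AddMonoidAlgebra.single (a j) (1 : k) := by simp [phi]
      rw [hX, AddMonoidAlgebra.support_coeff_single_mul _ _ (fun y => by simp) _]
      exact Finset.mem_map.mpr ⟨b, hb, rfl⟩
    obtain ⟨s', hs', heq⟩ := hXj' (a j + b) hmem
    exact ⟨b, ⟨support_subset a f b hb,
      fun hc => by obtain ⟨t, ht, hbt⟩ := hc; exact hnb t ht hbt⟩,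
      fun hc => hc.2 ⟨s', hs', heq⟩⟩
  · rintro ⟨b, ⟨hbS, hbAp⟩, hnot⟩
    have hjS : a j ∈ AddSubmonoid.closure (Set.range a) :=
      AddSubmonoid.subset_closure ⟨j, rfl⟩
    have hjb : a j + b ∈ AddSubmonoid.closure (Set.range a) := add_mem hjS hbS
    have hrep : ∃ s ∈ AddSubmonoid.closure (Set.range a), a j + b = a i + s := by
      by_contra h
      exact hnot ⟨hjb, h⟩
    obtain ⟨g, hg⟩ := exists_rep (k := k) a hbS
    refine ⟨Ideal.Quotient.mk J g, fun h0 => ?_, ?_⟩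
    · have hgJ : g ∈ J := Ideal.Quotient.eq_zero_iff_mem.mp h0
      have := (mem_J_iff a i g).mp hgJ b (by
        rw [hg]
        simp [Finsupp.support_single_ne_zero _ (one_ne_zero (α := k))])
      exact hbAp this
    · rw [← map_mul, Ideal.Quotient.eq_zero_iff_mem]
      refine (mem_J_iff a i (X j * g)).mpr fun b' hb' => ?_
      have hφ : phi k a (X j * g) = AddMonoidAlgebra.single (a j + b) (1 : k) := by
        rw [map_mul, hg]
        have hX : phi k a (X j) = AddMonoidAlgebra.single (a j) (1 : k) := by simp [phi]
        rw [hX, AddMonoidAlgebra.single_mul_single, one_mul]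
      rw [hφ] at hb'
      have := Finsupp.support_single_subset hb'
      simp only [Finset.mem_singleton] at this
      subst this
      exact hrep
end
end

section
/- Let S be a simplicial affine semigroup in ℕ^d, d ≥ 2, minimally generated by A = {a_1,...,a_e} with extremal rays E = {a_1,...,a_d} (ℚ-linearly independent), with toric ideal I_A, and let 1 ≤ i < j ≤ d. Then (x_i, x_j) is a regular sequence on k[x]/I_A if and only if: for all b_1, b_2 ∈ Ap(S, a_i) ∩ Ap(S, a_j), if b_1 - b_2 ∈ ℤa_i + ℤa_j, then b_1 = b_2. -/
open MvPolynomial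

noncomputable section

section AUX
variable {k : Type*} [Field k] {e d : ℕ} (a : Fin e → Fin d → ℕ)

/-- The defining algebra map of the toric ideal. -/
def phi (k : Type*) [Field k] {e d : ℕ} (a : Fin e → Fin d → ℕ) :
    MvPolynomial (Fin e) k →ₐ[k] AddMonoidAlgebra k (Fin d → ℕ) :=
  MvPolynomial.aeval (fun i => AddMonoidAlgebra.single (a i) (1 : k))

lemma mem_toric (g : MvPolynomial (Fin e) k) : g ∈ toricIdeal k a ↔ phi k a g = 0 :=
  RingHom.mem_ker

lemma aux_single_mul (c : Fin d → ℕ) (p : AddMonoidAlgebra k (Fin d → ℕ)) :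
    AddMonoidAlgebra.single c 1 * p = AddMonoidAlgebra.mapDomain (c + ·) p := by
  induction p using AddMonoidAlgebra.induction with
  | zero => simp [AddMonoidAlgebra.mapDomain_zero]
  | single_add t v p ht hv ih =>
    rw [mul_add, ih, AddMonoidAlgebra.mapDomain_add]
    congr 1
    rw [AddMonoidAlgebra.mapDomain_single]
    rw [AddMonoidAlgebra.single_mul_single, one_mul]

lemma aux_support_single_mul (c : Fin d → ℕ) (p : AddMonoidAlgebra k (Fin d → ℕ)) :
    (AddMonoidAlgebra.single c 1 * p).coeff.support = p.coeff.support.image (c + ·) := by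
  rw [aux_single_mul]
  exact (Finsupp.mapDomain_support_of_injective (add_right_injective c) p.coeff)

lemma phi_X (n : Fin e) : phi k a (X n) = AddMonoidAlgebra.single (a n) 1 := by simp [phi]

lemma phi_support (g : MvPolynomial (Fin e) k) :
    ↑(phi k a g).coeff.support ⊆ (AddSubmonoid.closure (Set.range a) : Set (Fin d → ℕ)) := by
  induction g using MvPolynomial.induction_on with
  | C r =>
    intro t ht
    have : phi k a (C r) = AddMonoidAlgebra.single 0 r := by
      simp [phi, AddMonoidAlgebra.coe_algebraMap]
    rw [this] at ht
    have := Finsupp.support_single_subset ht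
    simp only [Finset.mem_singleton] at this
    rw [this]
    exact AddSubmonoid.zero_mem _
  | add p q hp hq =>
    intro t ht
    rw [map_add, AddMonoidAlgebra.coeff_add] at ht
    rcases Finset.mem_union.1 (Finsupp.support_add ht) with h | h
    · exact hp h
    · exact hq h
  | mul_X p n ih =>
    intro t ht
    rw [map_mul] at ht
    rw [phi_X, mul_comm, aux_support_single_mul] at ht
    rcases Finset.mem_image.1 ht with ⟨s, hs, rfl⟩
    exact AddSubmonoid.add_mem _ (AddSubmonoid.subset_closure ⟨n, rfl⟩) (ih hs)

lemma phi_surj_single (t : Fin d → ℕ) (ht : t ∈ AddSubmonoid.closure (Set.range a)) :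
    ∃ g : MvPolynomial (Fin e) k, phi k a g = AddMonoidAlgebra.single t 1 := by
  induction ht using AddSubmonoid.closure_induction with
  | mem x hx =>
    rcases hx with ⟨n, rfl⟩
    exact ⟨X n, by simp [phi]⟩
  | zero => exact ⟨1, by simpa using (AddMonoidAlgebra.one_def)⟩
  | add x y hx hy ihx ihy =>
    rcases ihx with ⟨g, hg⟩; rcases ihy with ⟨h, hh⟩
    exact ⟨g * h, by rw [map_mul, hg, hh, AddMonoidAlgebra.single_mul_single, one_mul]⟩

lemma phi_surj (p : AddMonoidAlgebra k (Fin d → ℕ))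
    (hp : ↑p.coeff.support ⊆ (AddSubmonoid.closure (Set.range a) : Set (Fin d → ℕ))) :
    ∃ g : MvPolynomial (Fin e) k, phi k a g = p := by
  induction p using AddMonoidAlgebra.induction with
  | zero => exact ⟨0, map_zero _⟩
  | single_add t v p ht hv ih =>
    have hsupp : (AddMonoidAlgebra.single t v + p).coeff.support = insert t p.coeff.support := by
      rw [AddMonoidAlgebra.coeff_add, AddMonoidAlgebra.coeff_single, Finsupp.support_add_eq, Finsupp.support_single_ne_zero _ hv]
      · exact (Finset.insert_eq t _).symm
      · rw [Finsupp.support_single_ne_zero _ hv]; simpa using ht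
    rw [hsupp] at hp
    obtain ⟨g, hg⟩ := ih (fun s hs => hp (by simp [hs]))
    obtain ⟨g1, hg1⟩ := phi_surj_single (k := k) a t (hp (by simp))
    exact ⟨C v * g1 + g, by
      rw [map_add, map_mul, hg1, hg]
      congr 1
      simp [phi, AddMonoidAlgebra.coe_algebraMap]⟩

lemma aux_unshift (c : Fin d → ℕ) (Sset : Set (Fin d → ℕ)) (p : AddMonoidAlgebra k (Fin d → ℕ))
    (hp : ∀ t ∈ p.coeff.support, ∃ s ∈ Sset, t = c + s) :
    ∃ q : AddMonoidAlgebra k (Fin d → ℕ), ↑q.coeff.support ⊆ Sset ∧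
      p = AddMonoidAlgebra.single c 1 * q := by
  induction p using AddMonoidAlgebra.induction with
  | zero => exact ⟨0, by simp⟩
  | single_add t v p ht hv ih =>
    have hsupp : (AddMonoidAlgebra.single t v + p).coeff.support = insert t p.coeff.support := by
      rw [AddMonoidAlgebra.coeff_add, AddMonoidAlgebra.coeff_single, Finsupp.support_add_eq, Finsupp.support_single_ne_zero _ hv]
      · exact (Finset.insert_eq t _).symm
      · rw [Finsupp.support_single_ne_zero _ hv]; simpa using ht
    obtain ⟨q, hq, hpq⟩ := ih (fun s hs => hp s (by rw [hsupp]; simp [hs]))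
    obtain ⟨s, hsS, hts⟩ := hp t (by rw [hsupp]; simp)
    refine ⟨AddMonoidAlgebra.single s v + q, ?_, ?_⟩
    · intro x hx
      rw [AddMonoidAlgebra.coeff_add] at hx
      rcases Finset.mem_union.1 (Finsupp.support_add hx) with h | h
      · have := Finsupp.support_single_subset h
        simp only [Finset.mem_singleton] at this
        rw [this]; exact hsS
      · exact hq h
    · rw [mul_add, ← hpq]
      congr 1
      show _ = AddMonoidAlgebra.single c 1 * AddMonoidAlgebra.single s v
      rw [AddMonoidAlgebra.single_mul_single, one_mul, hts]

lemma mem_sup_iff (n : Fin e) (g : MvPolynomial (Fin e) k) :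
    g ∈ toricIdeal k a ⊔ Ideal.span {X n} ↔
      ∃ h : MvPolynomial (Fin e) k,
        phi k a g = AddMonoidAlgebra.single (a n) 1 * phi k a h := by
  constructor
  · intro hg
    obtain ⟨f, hf, x, hx, rfl⟩ := Submodule.mem_sup.mp hg
    obtain ⟨h, rfl⟩ := Ideal.mem_span_singleton'.mp hx
    refine ⟨h, ?_⟩
    rw [map_add, (mem_toric a f).mp hf, zero_add, map_mul, phi_X, mul_comm]
  · rintro ⟨h, hh⟩
    have : g = (g - X n * h) + X n * h := by ring
    rw [this]
    refine Submodule.add_mem_sup ?_ (Ideal.mem_span_singleton'.mpr ⟨h, mul_comm _ _⟩)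
    rw [mem_toric, map_sub, map_mul, phi_X, hh, sub_self]

lemma coeff_zero_single_mul (c : Fin d → ℕ) (hc : c ≠ 0)
    (p : AddMonoidAlgebra k (Fin d → ℕ)) :
    ((AddMonoidAlgebra.single c 1 * p : AddMonoidAlgebra k (Fin d → ℕ))).coeff 0 = 0 := by
  rw [show (AddMonoidAlgebra.single c 1 * p : AddMonoidAlgebra k (Fin d → ℕ)) =
    AddMonoidAlgebra.mapDomain (c + ·) p from aux_single_mul c p]
  show Finsupp.mapDomain (c + ·) p.coeff 0 = 0
  refine Finsupp.mapDomain_notin_range _ _ ?_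
  rintro ⟨y, hy⟩
  apply hc
  funext t
  have := congrFun hy t
  simpa using (Nat.add_eq_zero.mp this).1

lemma sup_pair_ne_top (n m : Fin e) (hn : a n ≠ 0) (hm : a m ≠ 0) :
    toricIdeal k a ⊔ Ideal.span {X n, X m} ≠ ⊤ := by
  intro htop
  have h1 : (1 : MvPolynomial (Fin e) k) ∈ toricIdeal k a ⊔ Ideal.span {X n, X m} := by
    rw [htop]; trivial
  obtain ⟨f, hf, x, hx, hfx⟩ := Submodule.mem_sup.mp h1
  obtain ⟨g, h, hgh⟩ := Ideal.mem_span_pair.mp hx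
  have := congrArg (phi k a) hfx
  rw [map_add, (mem_toric a f).mp hf, zero_add, ← hgh, map_add, map_mul, map_mul,
    phi_X, phi_X, map_one, mul_comm (phi k a g), mul_comm (phi k a h)] at this
  have h1' : ((1 : AddMonoidAlgebra k (Fin d → ℕ))).coeff 0 = (1:k) := by
    rw [AddMonoidAlgebra.one_def]; exact Finsupp.single_eq_same
  have h0 : ((AddMonoidAlgebra.single (a n) 1 * phi k a g +
      AddMonoidAlgebra.single (a m) 1 * phi k a h : AddMonoidAlgebra k (Fin d → ℕ))).coeff 0 =
        ((1 : AddMonoidAlgebra k (Fin d → ℕ))).coeff 0 := by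
    rw [this]
  rw [AddMonoidAlgebra.coeff_add, Finsupp.add_apply, coeff_zero_single_mul _ hn _, coeff_zero_single_mul _ hm _,
    add_zero, h1'] at h0
  exact (zero_ne_one : (0:k) ≠ 1) h0

lemma xi_regular (n : Fin e) (g : MvPolynomial (Fin e) k)
    (hg : X n * g ∈ toricIdeal k a) : g ∈ toricIdeal k a := by
  rw [mem_toric] at hg ⊢
  rw [map_mul, phi_X] at hg
  rcases mul_eq_zero.mp hg with h | h
  · exact absurd h (by
      intro hz
      have := congrArg (fun q : AddMonoidAlgebra k (Fin d → ℕ) => q.coeff (a n)) hz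
      simp only [AddMonoidAlgebra.coeff_single, AddMonoidAlgebra.coeff_zero, Finsupp.single_eq_same, Finsupp.coe_zero, Pi.zero_apply] at this
      exact one_ne_zero this)
  · exact h

lemma alg_comb (n m : Fin e) :
    (∀ g : MvPolynomial (Fin e) k,
        X m * g ∈ toricIdeal k a ⊔ Ideal.span {X n} →
        g ∈ toricIdeal k a ⊔ Ideal.span {X n}) ↔
    (∀ b ∈ AddSubmonoid.closure (Set.range a),
      (∃ s ∈ AddSubmonoid.closure (Set.range a), a m + b = a n + s) →
      ∃ s ∈ AddSubmonoid.closure (Set.range a), b = a n + s) := by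
  constructor
  · rintro H b hb ⟨s, hsS, hEq⟩
    obtain ⟨g, hg⟩ := phi_surj a (AddMonoidAlgebra.single b (1:k)) (by
      intro t ht
      have := Finsupp.support_single_subset ht
      simp only [Finset.mem_singleton] at this
      rw [this]; exact hb)
    obtain ⟨h, hh⟩ := phi_surj_single (k := k) a s hsS
    have hXmg : X m * g ∈ toricIdeal k a ⊔ Ideal.span {X n} := by
      rw [mem_sup_iff]
      refine ⟨h, ?_⟩
      rw [map_mul, phi_X, hg, hh, AddMonoidAlgebra.single_mul_single,
        AddMonoidAlgebra.single_mul_single, hEq]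
    obtain ⟨h', hh'⟩ := (mem_sup_iff a n g).mp (H g hXmg)
    rw [hg] at hh'
    have hbsupp : b ∈ (AddMonoidAlgebra.single b (1:k)).coeff.support := by
      rw [AddMonoidAlgebra.coeff_single, Finsupp.support_single_ne_zero _ one_ne_zero]
      exact Finset.mem_singleton_self b
    rw [hh', aux_support_single_mul] at hbsupp
    obtain ⟨s', hs', hEq'⟩ := Finset.mem_image.mp hbsupp
    exact ⟨s', phi_support a h' hs', hEq'.symm⟩
  · intro hC g hg
    rw [mem_sup_iff] at hg ⊢
    obtain ⟨h, hh⟩ := hg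
    rw [map_mul, phi_X] at hh
    have hsupp : ∀ t ∈ (phi k a g).coeff.support,
        ∃ s ∈ (AddSubmonoid.closure (Set.range a) : Set (Fin d → ℕ)), t = a n + s := by
      intro t ht
      have h1 : a m + t ∈ (AddMonoidAlgebra.single (a m) (1:k) * phi k a g).coeff.support := by
        rw [aux_support_single_mul]; exact Finset.mem_image_of_mem _ ht
      rw [hh, aux_support_single_mul] at h1
      obtain ⟨s₀, hs₀, hEq0⟩ := Finset.mem_image.mp h1
      exact hC t (phi_support a g ht) ⟨s₀, phi_support a h hs₀, hEq0.symm⟩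
    obtain ⟨q, hq, hpq⟩ := aux_unshift (a n) _ (phi k a g) hsupp
    obtain ⟨h', hh'⟩ := phi_surj a q hq
    exact ⟨h', by rw [hpq, hh']⟩

end AUX

section COMB
variable {d : ℕ} (S : AddSubmonoid (Fin d → ℕ)) (Ai Aj : Fin d → ℕ)

lemma comb_closed (hAjS : Aj ∈ S)
    (hC : ∀ b ∈ S, (∃ s ∈ S, Aj + b = Ai + s) → ∃ s ∈ S, b = Ai + s)
    (b : Fin d → ℕ) (hb : b ∈ S) (hap : ¬ ∃ s ∈ S, b = Ai + s) (n : ℕ) :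
    (b + n • Aj) ∈ S ∧ ¬ ∃ s ∈ S, b + n • Aj = Ai + s := by
  induction n with
  | zero => simp only [zero_nsmul, add_zero]; exact ⟨hb, hap⟩
  | succ n ih =>
    have hmem : b + (n + 1) • Aj ∈ S := by
      rw [succ_nsmul, ← add_assoc]
      exact S.add_mem ih.1 hAjS
    refine ⟨hmem, fun ⟨s, hsS, hEq⟩ => ih.2 ?_⟩
    apply hC _ ih.1
    refine ⟨s, hsS, ?_⟩
    rw [← hEq, succ_nsmul]
    abel

lemma comb_forward (hAiS : Ai ∈ S) (hAjS : Aj ∈ S)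
    (hC : ∀ b ∈ S, (∃ s ∈ S, Aj + b = Ai + s) → ∃ s ∈ S, b = Ai + s)
    (b₁ b₂ : Fin d → ℕ)
    (h₁ : b₁ ∈ S ∧ (¬ ∃ s ∈ S, b₁ = Ai + s) ∧ (¬ ∃ s ∈ S, b₁ = Aj + s))
    (h₂ : b₂ ∈ S ∧ (¬ ∃ s ∈ S, b₂ = Ai + s) ∧ (¬ ∃ s ∈ S, b₂ = Aj + s))
    (hz : ∃ z₁ z₂ : ℤ, (fun t => (b₁ t : ℤ)) - (fun t => (b₂ t : ℤ)) =
      z₁ • (fun t => (Ai t : ℤ)) + z₂ • (fun t => (Aj t : ℤ))) :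
    b₁ = b₂ := by
  have shiftI : ∀ (x : Fin d → ℕ) (r w : ℕ),
      x + (r + 1) • Ai + w • Aj = Ai + (x + r • Ai + w • Aj) := by
    intro x r w; funext t
    simp only [Pi.add_apply, Pi.smul_apply, smul_eq_mul]; ring
  have shiftJ : ∀ (x : Fin d → ℕ) (r : ℕ),
      x + (r + 1) • Aj = Aj + (x + r • Aj) := by
    intro x r; funext t
    simp only [Pi.add_apply, Pi.smul_apply, smul_eq_mul]; ring
  obtain ⟨z₁, z₂, hz⟩ := hz
  obtain ⟨p₁, q₁, hz1, hpq1⟩ : ∃ p q : ℕ, ((q:ℤ) - p = z₁) ∧ (p = 0 ∨ q = 0) :=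
    ⟨(-z₁).toNat, z₁.toNat, by omega, by omega⟩
  obtain ⟨p₂, q₂, hz2, hpq2⟩ : ∃ p q : ℕ, ((q:ℤ) - p = z₂) ∧ (p = 0 ∨ q = 0) :=
    ⟨(-z₂).toNat, z₂.toNat, by omega, by omega⟩
  have key : b₁ + p₁ • Ai + p₂ • Aj = b₂ + q₁ • Ai + q₂ • Aj := by
    funext t
    have h := congrFun hz t
    simp only [Pi.sub_apply, Pi.add_apply, Pi.smul_apply, smul_eq_mul] at h
    have : ((b₁ t : ℤ)) + p₁ * Ai t + p₂ * Aj t = (b₂ t) + q₁ * Ai t + q₂ * Aj t := by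
      linear_combination h - (Ai t : ℤ) * hz1 - (Aj t : ℤ) * hz2
    simp only [Pi.add_apply, Pi.smul_apply, smul_eq_mul]
    exact_mod_cast this
  have hq₁0 : q₁ = 0 := by
    by_contra hq
    obtain ⟨r, hr⟩ : ∃ r, q₁ = r + 1 := ⟨q₁ - 1, by omega⟩
    have hp₁0 : p₁ = 0 := by omega
    rw [hp₁0, hr, shiftI] at key
    simp only [zero_smul, add_zero] at key
    exact (comb_closed S Ai Aj hAjS hC b₁ h₁.1 h₁.2.1 p₂).2
      ⟨b₂ + r • Ai + q₂ • Aj,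
        S.add_mem (S.add_mem h₂.1 (AddSubmonoid.nsmul_mem S hAiS _))
          (AddSubmonoid.nsmul_mem S hAjS _),
        key⟩
  have hp₁0 : p₁ = 0 := by
    by_contra hp
    obtain ⟨r, hr⟩ : ∃ r, p₁ = r + 1 := ⟨p₁ - 1, by omega⟩
    rw [hq₁0, hr, shiftI] at key
    simp only [zero_smul, add_zero] at key
    exact (comb_closed S Ai Aj hAjS hC b₂ h₂.1 h₂.2.1 q₂).2
      ⟨b₁ + r • Ai + p₂ • Aj,
        S.add_mem (S.add_mem h₁.1 (AddSubmonoid.nsmul_mem S hAiS _))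
          (AddSubmonoid.nsmul_mem S hAjS _),
        key.symm⟩
  rw [hp₁0, hq₁0] at key
  simp only [zero_smul, add_zero] at key
  rcases Nat.eq_zero_or_pos p₂ with hp2 | hp2
  · rcases Nat.eq_zero_or_pos q₂ with hq2 | hq2
    · rw [hp2, hq2] at key; simpa using key
    · exfalso
      obtain ⟨r, hr⟩ : ∃ r, q₂ = r + 1 := ⟨q₂ - 1, by omega⟩
      rw [hp2, hr, shiftJ] at key
      simp only [zero_smul, add_zero] at key
      exact h₁.2.2 ⟨b₂ + r • Aj, S.add_mem h₂.1 (AddSubmonoid.nsmul_mem S hAjS _), key⟩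
  · exfalso
    have hq2 : q₂ = 0 := by omega
    obtain ⟨r, hr⟩ : ∃ r, p₂ = r + 1 := ⟨p₂ - 1, by omega⟩
    rw [hq2, hr, shiftJ] at key
    simp only [zero_smul, add_zero] at key
    exact h₂.2.2 ⟨b₁ + r • Aj, S.add_mem h₁.1 (AddSubmonoid.nsmul_mem S hAjS _), key.symm⟩

lemma sum_lt_of_ne_zero {x y : Fin d → ℕ} (hx : x ≠ 0) : ∑ t, y t < ∑ t, (x + y) t := by
  have h1 : ∑ t, (x + y) t = ∑ t, x t + ∑ t, y t := by
    simp only [Pi.add_apply]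
    exact Finset.sum_add_distrib
  have h2 : 0 < ∑ t, x t := by
    rcases Nat.eq_zero_or_pos (∑ t, x t) with h | h
    · exfalso
      apply hx
      funext t
      exact (Finset.sum_eq_zero_iff.mp h) t (Finset.mem_univ t)
    · exact h
  omega

lemma comb_decomp1 (hAjne : Aj ≠ 0) (hAjS : Aj ∈ S) :
    ∀ N (b : Fin d → ℕ), (∑ t, b t) = N → b ∈ S → (¬ ∃ s ∈ S, b = Ai + s) →
    ∃ (c : Fin d → ℕ) (m : ℕ), c ∈ S ∧ (¬ ∃ s ∈ S, c = Ai + s) ∧ (¬ ∃ s ∈ S, c = Aj + s) ∧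
      b = c + m • Aj := by
  intro N
  induction N using Nat.strong_induction_on with
  | _ N ih =>
    intro b hsum hb hap
    by_cases hbj : ∃ s ∈ S, b = Aj + s
    · obtain ⟨s, hsS, rfl⟩ := hbj
      have hlt : ∑ t, s t < N := hsum ▸ sum_lt_of_ne_zero hAjne
      have hap' : ¬ ∃ s' ∈ S, s = Ai + s' := by
        rintro ⟨s', hs', rfl⟩
        exact hap ⟨Aj + s', S.add_mem hAjS hs', by abel⟩
      obtain ⟨c, m, hcS, hci, hcj, hdec⟩ := ih _ hlt s rfl hsS hap'
      refine ⟨c, m + 1, hcS, hci, hcj, ?_⟩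
      rw [hdec, succ_nsmul]
      abel
    · exact ⟨b, 0, hb, hap, hbj, by simp⟩

lemma comb_decomp2 (hAine : Ai ≠ 0) (hAjne : Aj ≠ 0) (hAiS : Ai ∈ S) (hAjS : Aj ∈ S) :
    ∀ N (b : Fin d → ℕ), (∑ t, b t) = N → b ∈ S →
    ∃ (c : Fin d → ℕ) (u v : ℕ), c ∈ S ∧ (¬ ∃ s ∈ S, c = Ai + s) ∧
      (¬ ∃ s ∈ S, c = Aj + s) ∧ b = c + u • Ai + v • Aj := by
  intro N
  induction N using Nat.strong_induction_on with
  | _ N ih =>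
    intro b hsum hb
    by_cases hbi : ∃ s ∈ S, b = Ai + s
    · obtain ⟨s, hsS, rfl⟩ := hbi
      have hlt : ∑ t, s t < N := hsum ▸ sum_lt_of_ne_zero hAine
      obtain ⟨c, u, v, hcS, hci, hcj, hdec⟩ := ih _ hlt s rfl hsS
      refine ⟨c, u + 1, v, hcS, hci, hcj, ?_⟩
      rw [hdec, succ_nsmul]
      abel
    · by_cases hbj : ∃ s ∈ S, b = Aj + s
      · obtain ⟨s, hsS, rfl⟩ := hbj
        have hlt : ∑ t, s t < N := hsum ▸ sum_lt_of_ne_zero hAjne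
        obtain ⟨c, u, v, hcS, hci, hcj, hdec⟩ := ih _ hlt s rfl hsS
        refine ⟨c, u, v + 1, hcS, hci, hcj, ?_⟩
        rw [hdec, succ_nsmul]
        abel
      · exact ⟨b, 0, 0, hb, hbi, hbj, by simp⟩

lemma comb_backward (hAiS : Ai ∈ S) (hAjS : Aj ∈ S) (hAine : Ai ≠ 0) (hAjne : Aj ≠ 0)
    (hkey : ∀ u m v : ℕ, (m + 1) • Aj = (u + 1) • Ai + v • Aj → False)
    (hR : ∀ b₁ b₂ : Fin d → ℕ,
      (b₁ ∈ S ∧ (¬ ∃ s ∈ S, b₁ = Ai + s) ∧ (¬ ∃ s ∈ S, b₁ = Aj + s)) →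
      (b₂ ∈ S ∧ (¬ ∃ s ∈ S, b₂ = Ai + s) ∧ (¬ ∃ s ∈ S, b₂ = Aj + s)) →
      (∃ z₁ z₂ : ℤ, (fun t => (b₁ t : ℤ)) - (fun t => (b₂ t : ℤ)) =
        z₁ • (fun t => (Ai t : ℤ)) + z₂ • (fun t => (Aj t : ℤ))) →
      b₁ = b₂) :
    ∀ b ∈ S, (∃ s ∈ S, Aj + b = Ai + s) → ∃ s ∈ S, b = Ai + s := by
  rintro b hb ⟨s, hsS, hEq⟩
  by_contra hap
  obtain ⟨b', m, hb'S, hb'i, hb'j, hbdec⟩ :=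
    comb_decomp1 S Ai Aj hAjne hAjS (∑ t, b t) b rfl hb hap
  obtain ⟨c, u, v, hcS, hci, hcj, hsdec⟩ :=
    comb_decomp2 S Ai Aj hAine hAjne hAiS hAjS (∑ t, s t) s rfl hsS
  have hbc : b' = c := by
    apply hR b' c ⟨hb'S, hb'i, hb'j⟩ ⟨hcS, hci, hcj⟩
    refine ⟨(u : ℤ) + 1, (v : ℤ) - m - 1, ?_⟩
    funext t
    have hEq' : (Aj t : ℤ) + b t = Ai t + s t := by exact_mod_cast congrFun hEq t
    have hbdec' : (b t : ℤ) = b' t + m * Aj t := by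
      have := congrFun hbdec t
      simp only [Pi.add_apply, Pi.smul_apply, smul_eq_mul] at this
      exact_mod_cast this
    have hsdec' : (s t : ℤ) = c t + u * Ai t + v * Aj t := by
      have := congrFun hsdec t
      simp only [Pi.add_apply, Pi.smul_apply, smul_eq_mul] at this
      exact_mod_cast this
    simp only [Pi.sub_apply, Pi.add_apply, Pi.smul_apply, smul_eq_mul]
    linear_combination hEq' - hbdec' + hsdec'
  subst hbc
  apply hkey u m v
  funext t
  have hEq' : (Aj t : ℤ) + b t = Ai t + s t := by exact_mod_cast congrFun hEq t
  have hbdec' : (b t : ℤ) = b' t + m * Aj t := by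
    have := congrFun hbdec t
    simp only [Pi.add_apply, Pi.smul_apply, smul_eq_mul] at this
    exact_mod_cast this
  have hsdec' : (s t : ℤ) = b' t + u * Ai t + v * Aj t := by
    have := congrFun hsdec t
    simp only [Pi.add_apply, Pi.smul_apply, smul_eq_mul] at this
    exact_mod_cast this
  simp only [Pi.add_apply, Pi.smul_apply, smul_eq_mul]
  have : ((m : ℤ) + 1) * Aj t = ((u : ℤ) + 1) * Ai t + v * Aj t := by
    linear_combination hEq' - hbdec' + hsdec'
  exact_mod_cast this

end COMB

/-- for a simplicial affine semigroup with extremal rays `a_1,…,a_d`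
(ℚ-linearly independent) and `1 ≤ i < j ≤ d`, the pair `(x_i, x_j)` is a regular
sequence on `k[x]/I_A` if and only if any two elements of
`Ap(S, a_i) ∩ Ap(S, a_j)` differing by an element of `ℤ a_i + ℤ a_j` are equal. -/
theorem regular_sequence_iff_apery (k : Type*) [Field k] {e d : ℕ} (hde : d ≤ e)
    (hd : 2 ≤ d) (a : Fin e → (Fin d → ℕ))
    (hE : LinearIndependent ℚ (fun t : Fin d => (fun s => (a (Fin.castLE hde t) s : ℚ))))
    (S : AddSubmonoid (Fin d → ℕ)) (hS : S = AddSubmonoid.closure (Set.range a))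
    (i j : Fin d) (hij : i < j) :
    ((∀ g : MvPolynomial (Fin e) k,
        X (Fin.castLE hde i) * g ∈ toricIdeal k a → g ∈ toricIdeal k a) ∧
     (∀ g : MvPolynomial (Fin e) k,
        X (Fin.castLE hde j) * g ∈ toricIdeal k a ⊔ Ideal.span {X (Fin.castLE hde i)} →
          g ∈ toricIdeal k a ⊔ Ideal.span {X (Fin.castLE hde i)}) ∧
     (toricIdeal k a ⊔
        Ideal.span {X (Fin.castLE hde i), X (Fin.castLE hde j)} ≠ ⊤)) ↔
    (∀ b₁ b₂ : Fin d → ℕ,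
      (b₁ ∈ S ∧ (¬ ∃ s ∈ S, b₁ = a (Fin.castLE hde i) + s) ∧
        (¬ ∃ s ∈ S, b₁ = a (Fin.castLE hde j) + s)) →
      (b₂ ∈ S ∧ (¬ ∃ s ∈ S, b₂ = a (Fin.castLE hde i) + s) ∧
        (¬ ∃ s ∈ S, b₂ = a (Fin.castLE hde j) + s)) →
      (∃ z₁ z₂ : ℤ, (fun t => (b₁ t : ℤ)) - (fun t => (b₂ t : ℤ)) =
        z₁ • (fun t => (a (Fin.castLE hde i) t : ℤ)) +
        z₂ • (fun t => (a (Fin.castLE hde j) t : ℤ))) →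
      b₁ = b₂) := by
  subst hS
  have hij' : i ≠ j := ne_of_lt hij
  set i' := Fin.castLE hde i with hi'
  set j' := Fin.castLE hde j with hj'
  -- pair linear independence over ℚ
  have hPI : ∀ α β : ℚ,
      α • (fun s => (a i' s : ℚ)) + β • (fun s => (a j' s : ℚ)) = 0 → α = 0 ∧ β = 0 := by
    intro α β h
    set g : Fin d → ℚ := fun t => if t = i then α else if t = j then β else 0 with hg
    have hsum : ∑ t, g t • (fun s => (a (Fin.castLE hde t) s : ℚ)) = 0 := by
      have hsub : ∑ t ∈ ({i, j} : Finset (Fin d)), g t •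
          (fun s => (a (Fin.castLE hde t) s : ℚ)) =
          ∑ t, g t • (fun s => (a (Fin.castLE hde t) s : ℚ)) := by
        apply Finset.sum_subset (Finset.subset_univ _)
        intro x _ hx
        simp only [Finset.mem_insert, Finset.mem_singleton, not_or] at hx
        rw [hg]
        simp only [if_neg hx.1, if_neg hx.2, zero_smul]
      rw [← hsub, Finset.sum_pair hij']
      have hgi : g i = α := by simp [hg]
      have hgj : g j = β := by simp [hg, hij'.symm]
      rw [hgi, hgj]
      exact h
    have := Fintype.linearIndependent_iff.mp hE g hsum
    exact ⟨(this i).symm ▸ by simp [hg], (this j).symm ▸ by simp [hg, hij'.symm]⟩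
  have hAine : a i' ≠ 0 := by
    intro h0
    have : (1:ℚ) = 0 := by
      refine (hPI 1 0 ?_).1
      funext s
      simp [congrFun h0 s]
    exact one_ne_zero this
  have hAjne : a j' ≠ 0 := by
    intro h0
    have : (1:ℚ) = 0 := by
      refine (hPI 0 1 ?_).2
      funext s
      simp [congrFun h0 s]
    exact one_ne_zero this
  have hkey : ∀ u m v : ℕ, (m + 1) • a j' = (u + 1) • a i' + v • a j' → False := by
    intro u m v h
    have hq : ((u:ℚ) + 1) • (fun s => (a i' s : ℚ)) +
        ((v:ℚ) - (m + 1)) • (fun s => (a j' s : ℚ)) = 0 := by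
      funext s
      have hc := congrFun h s
      simp only [Pi.add_apply, Pi.smul_apply, smul_eq_mul] at hc ⊢
      have hcq : ((m:ℚ) + 1) * a j' s = ((u:ℚ) + 1) * a i' s + v * a j' s := by
        exact_mod_cast hc
      simp only [Pi.zero_apply]
      linarith
    have := (hPI _ _ hq).1
    have hu : (u:ℚ) + 1 > 0 := by positivity
    linarith
  have hAiS : a i' ∈ AddSubmonoid.closure (Set.range a) :=
    AddSubmonoid.subset_closure ⟨i', rfl⟩
  have hAjS : a j' ∈ AddSubmonoid.closure (Set.range a) :=
    AddSubmonoid.subset_closure ⟨j', rfl⟩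
  constructor
  · rintro ⟨_, h2, _⟩ b₁ b₂ hb₁ hb₂ hz
    exact comb_forward _ _ _ hAiS hAjS ((alg_comb a i' j').mp h2) b₁ b₂ hb₁ hb₂ hz
  · intro hR
    refine ⟨fun g hg => xi_regular a i' g hg,
      (alg_comb a i' j').mpr
        (comb_backward _ _ _ hAiS hAjS hAine hAjne hkey hR),
      sup_pair_ne_top a i' j' hAine hAjne⟩

end
end

section
/- Let S be a simplicial affine semigroup in ℕ^d with extremal ray generators E = {a_1,...,a_d}, and let E' ⊂ E. The following are equivalent: (1) Ap(S, E') has a maximal element with respect to ⪯_S; (2) there exists b ∈ Ap(S, E') such that b + a ∉ Ap(S, E') for every a ∈ E \ E'. -/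
/-- Apéry set of `S` with respect to the rays indexed by `B`. -/
def aperyIdx {d : ℕ} (S : AddSubmonoid (Fin d → ℕ)) (a : Fin d → (Fin d → ℕ))
    (B : Finset (Fin d)) : Set (Fin d → ℕ) :=
  {x | x ∈ S ∧ ∀ i ∈ B, ¬ ∃ s ∈ S, x = a i + s}

/-- The semigroup order `u ⪯_S v`. -/
def semigroupLE {d : ℕ} (S : AddSubmonoid (Fin d → ℕ)) (u v : Fin d → ℕ) : Prop :=
  ∃ s ∈ S, v = u + s

lemma apery_decomp {d : ℕ} (S : AddSubmonoid (Fin d → ℕ)) (a : Fin d → (Fin d → ℕ))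
    (hne : ∀ i, a i ≠ 0) :
    ∀ n : ℕ, ∀ x ∈ S, (∑ t, x t) = n →
      ∃ w ∈ aperyIdx S a Finset.univ, ∃ l : Fin d → ℕ, x = w + ∑ i, l i • a i := by
  intro n
  induction n using Nat.strong_induction_on with
  | _ n ih =>
    intro x hx hsum
    by_cases h : x ∈ aperyIdx S a Finset.univ
    · exact ⟨x, h, 0, by simp⟩
    · have h' : ∃ i, ∃ s ∈ S, x = a i + s := by
        simp only [aperyIdx, Set.mem_setOf_eq, not_and, not_forall] at h
        obtain ⟨i, _, hi⟩ := h hx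
        exact ⟨i, not_not.mp hi⟩
      obtain ⟨i, s, hs, hxs⟩ := h'
      have hpos : 0 < ∑ t, a i t := by
        obtain ⟨t, ht⟩ := Function.ne_iff.mp (hne i)
        exact Finset.sum_pos' (fun _ _ => Nat.zero_le _)
          ⟨t, Finset.mem_univ t, Nat.pos_of_ne_zero ht⟩
      have hlt : (∑ t, s t) < n := by
        subst hsum hxs
        have : ∑ t, (a i + s) t = (∑ t, a i t) + ∑ t, s t := by
          simp [Finset.sum_add_distrib]
        omega
      obtain ⟨w, hw, l, hl⟩ := ih _ hlt s hs rfl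
      refine ⟨w, hw, fun j => l j + (if j = i then 1 else 0), ?_⟩
      have hsingle : ∑ j, (if j = i then 1 else 0 : ℕ) • a j = a i := by
        rw [Finset.sum_eq_single i]
        · simp
        · intro j _ hj; simp [hj]
        · simp
      calc x = a i + (w + ∑ j, l j • a j) := by rw [hxs, hl]
        _ = w + (∑ j, l j • a j + ∑ j, (if j = i then 1 else 0 : ℕ) • a j) := by
            rw [hsingle]; ring
        _ = w + ∑ j, (l j + (if j = i then 1 else 0)) • a j := by
            rw [← Finset.sum_add_distrib]
            congr 1
            exact Finset.sum_congr rfl (fun j _ => by simp [add_smul])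

/-- for a simplicial affine semigroup `S` with extremal rays
`E = {a_1,…,a_d}` and `E' ⊂ E`, the Apéry set `Ap(S, E')` has a `⪯_S`-maximal element
iff there is `b ∈ Ap(S, E')` with `b + a_i ∉ Ap(S, E')` for every `a_i ∈ E \ E'`. -/
theorem apery_has_maximal_iff {d : ℕ} (S : AddSubmonoid (Fin d → ℕ))
    (a : Fin d → (Fin d → ℕ)) (ha : ∀ i, a i ∈ S)
    (hE : LinearIndependent ℚ (fun i : Fin d => (fun t => (a i t : ℚ))))
    (hFin : (aperyIdx S a Finset.univ).Finite)
    (E' : Finset (Fin d)) (hE' : E' ⊂ Finset.univ) :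
    (∃ m ∈ aperyIdx S a E', ∀ x ∈ aperyIdx S a E', semigroupLE S m x → x = m) ↔
    (∃ b ∈ aperyIdx S a E', ∀ i ∈ E'ᶜ, b + a i ∉ aperyIdx S a E') := by
  have hne : ∀ i, a i ≠ 0 := by
    intro i hi
    exact hE.ne_zero i (by funext t; simp [hi])
  constructor
  · rintro ⟨m, hm, hmax⟩
    refine ⟨m, hm, fun i _ hmem => ?_⟩
    have heq : m + a i = m := hmax _ hmem ⟨a i, ha i, rfl⟩
    refine hne i (funext fun t => ?_)
    have := congrFun heq t
    simp only [Pi.add_apply, Pi.zero_apply] at this ⊢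
    omega
  · rintro ⟨b, hb, hb2⟩
    -- Key claim: if s ∈ S and b + s ∈ Ap(S,E'), then s ∈ Ap(S,univ).
    have key : ∀ s ∈ S, b + s ∈ aperyIdx S a E' → s ∈ aperyIdx S a Finset.univ := by
      intro s hs hbs
      obtain ⟨w, hw, l, hl⟩ := apery_decomp S a hne _ s hs rfl
      have hl0 : ∀ k, l k = 0 := by
        intro k
        by_contra hk
        -- split off one copy of a k
        set l' : Fin d → ℕ := Function.update l k (l k - 1) with hl'
        have hsplit : ∑ j, l j • a j = a k + ∑ j, l' j • a j := by
          have hpt : ∀ j, l j • a j = (if j = k then a k else 0) + l' j • a j := by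
            intro j
            by_cases hj : j = k
            · subst hj
              simp only [if_pos rfl, hl', Function.update_self]
              conv_lhs => rw [← Nat.succ_pred_eq_of_pos (Nat.pos_of_ne_zero hk)]
              rw [succ_nsmul']; simp [Nat.pred_eq_sub_one]
            · simp [hj, hl', Function.update_of_ne hj]
          calc ∑ j, l j • a j
              = ∑ j, ((if j = k then a k else 0) + l' j • a j) :=
                Finset.sum_congr rfl (fun j _ => hpt j)
            _ = (∑ j, if j = k then a k else 0) + ∑ j, l' j • a j :=
                Finset.sum_add_distrib
            _ = a k + ∑ j, l' j • a j := by rw [Finset.sum_ite_eq' Finset.univ k (fun _ => a k)]; simp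
        have hrest : (∑ j, l' j • a j) ∈ S :=
          AddSubmonoid.sum_mem S (fun j _ => AddSubmonoid.nsmul_mem S (ha j) _)
        by_cases hkE : k ∈ E'
        · exact hbs.2 k hkE ⟨b + w + ∑ j, l' j • a j,
            S.add_mem (S.add_mem hb.1 hw.1) hrest, by rw [hl, hsplit]; ring⟩
        · have hbk : b + a k ∉ aperyIdx S a E' := hb2 k (Finset.mem_compl.mpr hkE)
          have hbkS : b + a k ∈ S := S.add_mem hb.1 (ha k)
          have : ∃ i ∈ E', ∃ t ∈ S, b + a k = a i + t := by
            by_contra hc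
            push_neg at hc
            exact hbk ⟨hbkS, fun i hi => by
              rintro ⟨t, ht, hteq⟩
              exact (hc i hi t ht) hteq⟩
          obtain ⟨i, hiE, t, ht, hteq⟩ := this
          exact hbs.2 i hiE ⟨t + w + ∑ j, l' j • a j,
            S.add_mem (S.add_mem ht hw.1) hrest, by
              rw [hl, hsplit]
              have : b + (w + (a k + ∑ j, l' j • a j)) =
                  (b + a k) + (w + ∑ j, l' j • a j) := by ring
              rw [this, hteq]; ring⟩
      have : s = w := by rw [hl]; simp [hl0]
      rwa [this]
    -- The set of elements of Ap(S,E') above b is finite.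
    set D : Set (Fin d → ℕ) := {x ∈ aperyIdx S a E' | semigroupLE S b x} with hD
    have hDfin : D.Finite := by
      apply Set.Finite.subset (hFin.image (fun s => b + s))
      rintro x ⟨hx, s, hs, rfl⟩
      exact ⟨s, key s hs hx, rfl⟩
    have hDne : D.Nonempty := ⟨b, hb, 0, S.zero_mem, by simp⟩
    obtain ⟨m, hmD, hmax⟩ := hDfin.exists_maximalFor (fun x => ∑ t, x t) D hDne
    refine ⟨m, hmD.1, fun x hx hle => ?_⟩
    obtain ⟨s, hs, rfl⟩ := hle
    obtain ⟨s₀, hs₀, hbm⟩ := hmD.2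
    have hxD : m + s ∈ D := ⟨hx, s₀ + s, S.add_mem hs₀ hs, by rw [hbm]; ring⟩
    have hsum : (∑ t, (m + s) t) = (∑ t, m t) + ∑ t, s t := by
      simp [Finset.sum_add_distrib]
    have : (∑ t, (m + s) t) ≤ ∑ t, m t :=
      hmax hxD (by show (∑ t, m t) ≤ ∑ t, (m + s) t; omega)
    have hs0 : ∀ t, s t = 0 := by
      intro t
      have h1 : (∑ t, s t) = 0 := by omega
      have := Finset.sum_eq_zero_iff.mp h1 t (Finset.mem_univ t)
      exact this
    have : s = 0 := funext hs0
    rw [this]; simp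
end

section
/- Let S be a simplicial affine semigroup in ℕ^d with extremal rays E and suppose b ∈ Ap(S, E') for some E' ⊂ E is such that b + a ∉ Ap(S, E') for every a ∈ E \ E'. Then b + c ∉ Ap(S, E') for every c ∈ S \ Ap(S, E). -/
/-- if `b ∈ Ap(S, E')` satisfies `b + a ∉ Ap(S, E')` for every
`a ∈ E \ E'`, then `b + c ∉ Ap(S, E')` for every `c ∈ S \ Ap(S, E)`. -/
theorem add_not_mem_apery_of_not_mem_aperyE {d : ℕ} (S : AddSubmonoid (Fin d → ℕ))
    (a : Fin d → (Fin d → ℕ)) (ha : ∀ i, a i ∈ S)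
    (hE : LinearIndependent ℚ (fun i : Fin d => (fun t => (a i t : ℚ))))
    (E' : Finset (Fin d)) (hE' : E' ⊂ Finset.univ)
    (b : Fin d → ℕ) (hb : b ∈ aperyIdx S a E')
    (hstep : ∀ i ∈ E'ᶜ, b + a i ∉ aperyIdx S a E') :
    ∀ c ∈ S, c ∉ aperyIdx S a Finset.univ → b + c ∉ aperyIdx S a E' := by
  intro c hc hcap
  obtain ⟨hbS, hbap⟩ := hb
  -- extract a ray dividing c
  have : ∃ i, ∃ s ∈ S, c = a i + s := by
    by_contra h
    push_neg at h
    exact hcap ⟨hc, fun i _ => by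
      intro ⟨s, hs, hcs⟩
      exact (h i s hs) hcs⟩
  obtain ⟨i, s, hsS, hcs⟩ := this
  by_cases hi : i ∈ E'
  · rintro ⟨-, hap⟩
    exact hap i hi ⟨b + s, S.add_mem hbS hsS, by rw [hcs]; ring⟩
  · have h1 := hstep i (Finset.mem_compl.mpr hi)
    have h2 : b + a i ∈ S := S.add_mem hbS (ha i)
    have : ∃ j ∈ E', ∃ t ∈ S, b + a i = a j + t := by
      by_contra h
      push_neg at h
      exact h1 ⟨h2, fun j hj => by
        intro ⟨t, htS, het⟩
        exact h j hj t htS het⟩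
    obtain ⟨j, hj, t, htS, het⟩ := this
    rintro ⟨-, hap⟩
    refine hap j hj ⟨t + s, S.add_mem htS hsS, ?_⟩
    have : b + c = b + a i + s := by rw [hcs]; ring
    rw [this, het]; ring
end

section
/- Let S be a simplicial affine semigroup in ℕ^3 with extremal rays E = {a_1, a_2, a_3}, and b ∈ S. The complex T_b = {F ⊆ E : b - ∑_{a∈F} a ∈ S} is disconnected if and only if there is a permutation {i,j,k} = {1,2,3} such that b ∉ Ap(S, a_i) ∩ Ap(S, a_j) and b - a_k ∈ Ap(S, a_i) ∩ Ap(S, a_j). -/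
/-- `i` is a vertex of `T_b`. -/
def isVertex {d : ℕ} (S : AddSubmonoid (Fin d → ℕ)) (a : Fin d → (Fin d → ℕ))
    (b : Fin d → ℕ) (i : Fin d) : Prop :=
  ∃ s ∈ S, b = a i + s

/-- `{i, j}` is an edge of `T_b`. -/
def isEdge {d : ℕ} (S : AddSubmonoid (Fin d → ℕ)) (a : Fin d → (Fin d → ℕ))
    (b : Fin d → ℕ) (i j : Fin d) : Prop :=
  i ≠ j ∧ ∃ s ∈ S, b = a i + a j + s

/-- `T_b` is disconnected. -/
def TbDisconnected {d : ℕ} (S : AddSubmonoid (Fin d → ℕ)) (a : Fin d → (Fin d → ℕ))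
    (b : Fin d → ℕ) : Prop :=
  ∃ i j, isVertex S a b i ∧ isVertex S a b j ∧
    ¬ Relation.ReflTransGen (isEdge S a b) i j

/-- Membership in `Ap(S, a_i)`. -/
def memApery (S : AddSubmonoid (Fin 3 → ℕ)) (a : Fin 3 → (Fin 3 → ℕ))
    (x : Fin 3 → ℕ) (i : Fin 3) : Prop :=
  x ∈ S ∧ ¬ ∃ s ∈ S, x = a i + s

lemma fin3_cover : ∀ i j : Fin 3, i ≠ j →
    ∃ k, k ≠ i ∧ k ≠ j ∧ ∀ m : Fin 3, m = i ∨ m = j ∨ m = k := by decide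

lemma fin3_univ : ∀ p q r : Fin 3, p ≠ q → p ≠ r → q ≠ r →
    ({p, q, r} : Finset (Fin 3)) = Finset.univ := by decide

lemma fin3_univ' : ∀ p q r : Fin 3, ({p, q, r} : Finset (Fin 3)) = Finset.univ →
    p ≠ q ∧ p ≠ r ∧ q ≠ r ∧ ∀ m : Fin 3, m = p ∨ m = q ∨ m = r := by decide

lemma edge_symm {d : ℕ} {S : AddSubmonoid (Fin d → ℕ)} {a : Fin d → (Fin d → ℕ)}
    {b : Fin d → ℕ} {i j : Fin d} (h : isEdge S a b i j) : isEdge S a b j i := by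
  obtain ⟨hij, s, hs, he⟩ := h
  exact ⟨hij.symm, s, hs, by rw [he]; ring⟩

/-- for `d = 3`, `T_b` is disconnected iff there is a permutation
`{i,j,k} = {1,2,3}` with `b ∉ Ap(S,a_i) ∩ Ap(S,a_j)` and
`b - a_k ∈ Ap(S,a_i) ∩ Ap(S,a_j)`. -/
theorem TbDisconnected_iff_apery_dim3 (S : AddSubmonoid (Fin 3 → ℕ))
    (a : Fin 3 → (Fin 3 → ℕ)) (ha : ∀ i, a i ∈ S)
    (hE : LinearIndependent ℚ (fun i : Fin 3 => (fun t => (a i t : ℚ))))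
    (b : Fin 3 → ℕ) (hb : b ∈ S) :
    TbDisconnected S a b ↔
      ∃ i j k : Fin 3, ({i, j, k} : Finset (Fin 3)) = Finset.univ ∧
        ¬ (memApery S a b i ∧ memApery S a b j) ∧
        ∃ c, b = a k + c ∧ memApery S a c i ∧ memApery S a c j := by
  constructor
  · rintro ⟨i, j, hvi, hvj, hnp⟩
    have hij : i ≠ j := by rintro rfl; exact hnp Relation.ReflTransGen.refl
    obtain ⟨k, hki, hkj, hcov⟩ := fin3_cover i j hij
    have hEij : ¬ isEdge S a b i j := fun h => hnp (Relation.ReflTransGen.single h)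
    by_cases hEik : isEdge S a b i k
    · -- edge {i,k} present: j is isolated; use (i, k, j)
      have hEjk : ¬ isEdge S a b j k := fun h =>
        hnp ((Relation.ReflTransGen.single hEik).tail (edge_symm h))
      obtain ⟨c, hc, hbc⟩ := hvj
      refine ⟨i, k, j, fin3_univ i k j (Ne.symm hki) hij hkj, ?_, c, hbc,
        ⟨hc, ?_⟩, ⟨hc, ?_⟩⟩
      · rintro ⟨hA, _⟩
        exact hA.2 hvi
      · rintro ⟨s, hs, he⟩
        exact hEij ⟨hij, s, hs, by rw [hbc, he]; ring⟩
      · rintro ⟨s, hs, he⟩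
        exact hEjk ⟨Ne.symm hkj, s, hs, by rw [hbc, he]; ring⟩
    · -- edge {i,k} absent: i is isolated; use (j, k, i)
      obtain ⟨c, hc, hbc⟩ := hvi
      refine ⟨j, k, i, fin3_univ j k i (Ne.symm hkj) hij.symm hki, ?_, c, hbc,
        ⟨hc, ?_⟩, ⟨hc, ?_⟩⟩
      · rintro ⟨hA, _⟩
        exact hA.2 hvj
      · rintro ⟨s, hs, he⟩
        exact hEij ⟨hij, s, hs, by rw [hbc, he]; ring⟩
      · rintro ⟨s, hs, he⟩
        exact hEik ⟨Ne.symm hki, s, hs, by rw [hbc, he]; ring⟩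
  · rintro ⟨i, j, k, huniv, hnap, c, hbc, ⟨hcS, hci⟩, ⟨-, hcj⟩⟩
    obtain ⟨hij, hik, hjk, hcov⟩ := fin3_univ' i j k huniv
    have hvk : isVertex S a b k := ⟨c, hcS, hbc⟩
    -- no edge has k as an endpoint
    have hnoedge : ∀ m, ¬ isEdge S a b k m := by
      rintro m ⟨hkm, s, hs, he⟩
      rcases hcov m with rfl | rfl | rfl
      · apply hci
        refine ⟨s, hs, ?_⟩
        have : a k + c = a k + (a m + s) := by rw [← hbc, he]; ring
        exact add_left_cancel this
      · apply hcj
        refine ⟨s, hs, ?_⟩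
        have : a k + c = a k + (a m + s) := by rw [← hbc, he]; ring
        exact add_left_cancel this
      · exact hkm rfl
    have hnopath : ∀ w, w ≠ k → ¬ Relation.ReflTransGen (isEdge S a b) k w := by
      intro w hw h
      rcases Relation.ReflTransGen.cases_head h with h1 | ⟨m, hm, _⟩
      · exact hw h1.symm
      · exact hnoedge m hm
    by_cases hvi : isVertex S a b i
    · exact ⟨k, i, hvk, hvi, hnopath i hik⟩
    · have hvj : isVertex S a b j := by
        by_contra hvj
        exact hnap ⟨⟨hb, hvi⟩, ⟨hb, hvj⟩⟩
      exact ⟨k, j, hvk, hvj, hnopath j hjk⟩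
end

section
/- Let S be a simplicial affine semigroup in ℕ^3 with extremal rays E = {a_1, a_2, a_3}. If c is a maximal element of Ap(S, a_i) ∩ Ap(S, a_j) with respect to ⪯_S (for some {i,j,k} = {1,2,3}), then b := c + a_k satisfies: b ∉ Ap(S, a_i) ∩ Ap(S, a_j), b - a_k ∈ Ap(S, a_i) ∩ Ap(S, a_j), and hence T_b is a disconnected simplicial complex. -/
/-- if `c` is `⪯_S`-maximal in `Ap(S,a_i) ∩ Ap(S,a_j)` then
`b := c + a_k` satisfies `b ∉ Ap(S,a_i) ∩ Ap(S,a_j)`,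
`b - a_k ∈ Ap(S,a_i) ∩ Ap(S,a_j)`, and `T_b` is disconnected. -/
theorem disconnected_of_maximal_apery (S : AddSubmonoid (Fin 3 → ℕ))
    (a : Fin 3 → (Fin 3 → ℕ)) (ha : ∀ i, a i ∈ S)
    (hE : LinearIndependent ℚ (fun i : Fin 3 => (fun t => (a i t : ℚ))))
    (i j k : Fin 3) (hperm : ({i, j, k} : Finset (Fin 3)) = Finset.univ)
    (c : Fin 3 → ℕ) (hc : memApery S a c i ∧ memApery S a c j)
    (hmax : ∀ x, memApery S a x i ∧ memApery S a x j → semigroupLE S c x → x = c) :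
    ¬ (memApery S a (c + a k) i ∧ memApery S a (c + a k) j) ∧
    (∃ c', c + a k = a k + c' ∧ memApery S a c' i ∧ memApery S a c' j) ∧
    TbDisconnected S a (c + a k) := by
  obtain ⟨hci, hcj⟩ := hc
  have hakS := ha k
  -- distinctness of i, j, k
  have hik : i ≠ k := by
    rintro rfl
    have he : ({i, j} : Finset (Fin 3)) = Finset.univ := by
      ext t; rw [← hperm]; simp; tauto
    have h1 : ({i, j} : Finset (Fin 3)).card = 3 := by rw [he]; simp
    have h2 := Finset.card_insert_le i ({j} : Finset (Fin 3))
    simp at h2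
    omega
  have hjk : j ≠ k := by
    rintro rfl
    have he : ({i, j} : Finset (Fin 3)) = Finset.univ := by
      ext t; rw [← hperm]; simp
    have h1 : ({i, j} : Finset (Fin 3)).card = 3 := by rw [he]; simp
    have h2 := Finset.card_insert_le i ({j} : Finset (Fin 3))
    simp at h2
    omega
  have hak0 : a k ≠ 0 := by
    intro h
    apply hE.ne_zero k
    funext t
    simp [h]
  have hbc : c + a k ≠ c := by
    intro h
    apply hak0
    funext t
    have := congrFun h t
    simp [Pi.add_apply] at this ⊢
    omega
  have part1 : ¬ (memApery S a (c + a k) i ∧ memApery S a (c + a k) j) := by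
    intro h
    exact hbc (hmax _ h ⟨a k, hakS, rfl⟩)
  refine ⟨part1, ⟨c, add_comm c (a k), hci, hcj⟩, ?_⟩
  have hbS : c + a k ∈ S := S.add_mem hci.1 hakS
  have hvk : isVertex S a (c + a k) k := ⟨c, hci.1, add_comm c (a k)⟩
  have hnoedge : ∀ t, ¬ isEdge S a (c + a k) t k := by
    rintro t ⟨htk, s, hs, heq⟩
    have ht : t = i ∨ t = j := by
      have hmem : t ∈ ({i, j, k} : Finset (Fin 3)) := by
        rw [hperm]; exact Finset.mem_univ t
      simp at hmem
      tauto
    have hc' : c = a t + s := by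
      funext x
      have := congrFun heq x
      simp [Pi.add_apply] at this ⊢
      omega
    rcases ht with rfl | rfl
    · exact hci.2 ⟨s, hs, hc'⟩
    · exact hcj.2 ⟨s, hs, hc'⟩
  have key : ∀ v, v ≠ k → ∀ x, Relation.ReflTransGen (isEdge S a (c + a k)) v x → x ≠ k := by
    intro v hvne x hx
    induction hx with
    | refl => exact hvne
    | tail h1 h2 ih =>
      rintro rfl
      exact hnoedge _ h2
  by_cases hvi : ∃ s ∈ S, c + a k = a i + s
  · obtain ⟨s, hs, hseq⟩ := hvi
    exact ⟨i, k, ⟨s, hs, hseq⟩, hvk, fun h => key i hik k h rfl⟩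
  · have hmj : ¬ memApery S a (c + a k) j := fun h => part1 ⟨⟨hbS, hvi⟩, h⟩
    have hvj : ∃ s ∈ S, c + a k = a j + s := by
      by_contra h
      exact hmj ⟨hbS, h⟩
    obtain ⟨s, hs, hseq⟩ := hvj
    exact ⟨j, k, ⟨s, hs, hseq⟩, hvk, fun h => key j hjk k h rfl⟩
end

section
/- Let S be a simplicial affine semigroup in ℕ^4 with extremal rays E = {a_1, a_2, a_3, a_4}, and suppose there is a permutation {i,j,k,l} = {1,2,3,4} and b ∈ Ap(S, a_i) ∩ Ap(S, a_j) with b + a_k - a_i ∈ S and b + a_l - a_i ∈ S. Set c := b + a_k + a_l. Then the simplicial complex T_c = {F ⊆ E : c - ∑_{a∈F} a ∈ S} contains the three edges {i,k}, {i,l}, {k,l} but does not contain the triangle {i,k,l} (i.e., T_c contains a hollow triangle on vertices i, k, l). -/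
/-- (`d = 4`) if `b ∈ Ap(S,a_i) ∩ Ap(S,a_j)` with
`b + a_k - a_i ∈ S` and `b + a_l - a_i ∈ S`, then for `c := b + a_k + a_l`
the simplicial complex `T_c` contains the edges `{i,k}`, `{i,l}`, `{k,l}`
but not the triangle `{i,k,l}` (a hollow triangle on `i, k, l`). -/
theorem hollow_triangle_in_Tc (S : AddSubmonoid (Fin 4 → ℕ))
    (a : Fin 4 → (Fin 4 → ℕ)) (ha : ∀ i, a i ∈ S)
    (hE : LinearIndependent ℚ (fun i : Fin 4 => (fun t => (a i t : ℚ))))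
    (i j kk l : Fin 4) (hperm : ({i, j, kk, l} : Finset (Fin 4)) = Finset.univ)
    (b : Fin 4 → ℕ) (hb : b ∈ S)
    (hApi : ¬ ∃ s ∈ S, b = a i + s) (hApj : ¬ ∃ s ∈ S, b = a j + s)
    (hk : ∃ s ∈ S, b + a kk = a i + s) (hl : ∃ s ∈ S, b + a l = a i + s)
    (c : Fin 4 → ℕ) (hc : c = b + a kk + a l) :
    (∃ s ∈ S, c = a i + a kk + s) ∧
    (∃ s ∈ S, c = a i + a l + s) ∧
    (∃ s ∈ S, c = a kk + a l + s) ∧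
    ¬ ∃ s ∈ S, c = a i + a kk + a l + s := by
  obtain ⟨sk, hsk, hsk'⟩ := hk
  obtain ⟨sl, hsl, hsl'⟩ := hl
  refine ⟨⟨sl, hsl, ?_⟩, ⟨sk, hsk, ?_⟩, ⟨b, hb, ?_⟩, ?_⟩
  · rw [hc]
    have : b + a kk + a l = (b + a l) + a kk := by ring
    rw [this, hsl']; ring
  · rw [hc]
    have : b + a kk + a l = (b + a kk) + a l := by ring
    rw [this, hsk']; ring
  · rw [hc]; ring
  · rintro ⟨s, hs, hs'⟩
    apply hApi
    refine ⟨s, hs, ?_⟩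
    have h : b + (a kk + a l) = (a i + s) + (a kk + a l) := by
      rw [hc] at hs'
      calc b + (a kk + a l) = b + a kk + a l := by ring
        _ = a i + a kk + a l + s := hs'
        _ = (a i + s) + (a kk + a l) := by ring
    exact add_right_cancel h
end

section
/- Let S be a simplicial affine semigroup in ℕ^d with extremal rays E = {a_1,...,a_d}, and suppose that for every b ∈ S the complex T_b = {F ⊆ E : b - ∑_{a∈F} a ∈ S} has no isolated vertex whenever it is disconnected. Then for every c ∈ Ap(S, E), every index 1 ≤ l ≤ d and every u ∈ ℕ, we have c + u·a_l ∈ Ap(S, E \ {a_l}). -/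
/-- `i` is an isolated vertex of `T_b`. -/
def isIsolated {d : ℕ} (S : AddSubmonoid (Fin d → ℕ)) (a : Fin d → (Fin d → ℕ))
    (b : Fin d → ℕ) (i : Fin d) : Prop :=
  isVertex S a b i ∧ ∀ j, ¬ isEdge S a b i j

/-- if for every `b ∈ S` the complex `T_b` has no isolated vertex
whenever it is disconnected, then for every `c ∈ Ap(S, E)`, every `l` and every
`u ∈ ℕ`, one has `c + u • a_l ∈ Ap(S, E \ {a_l})`. -/
theorem apery_stable_of_no_isolated_vertex {d : ℕ} (S : AddSubmonoid (Fin d → ℕ))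
    (a : Fin d → (Fin d → ℕ)) (ha : ∀ i, a i ∈ S)
    (hE : LinearIndependent ℚ (fun i : Fin d => (fun t => (a i t : ℚ))))
    (hFin : {x | x ∈ S ∧ ∀ t, ¬ ∃ s ∈ S, x = a t + s}.Finite)
    (hno : ∀ b ∈ S, TbDisconnected S a b → ¬ ∃ i, isIsolated S a b i)
    (c : Fin d → ℕ) (hc : c ∈ S) (hcAp : ∀ t, ¬ ∃ s ∈ S, c = a t + s)
    (l : Fin d) (u : ℕ) :
    (c + u • a l) ∈ S ∧
      ∀ m, m ≠ l → ¬ ∃ s ∈ S, c + u • a l = a m + s := by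
  induction u with
  | zero =>
    simp only [zero_smul, add_zero]
    exact ⟨hc, fun m _ h => hcAp m h⟩
  | succ u ih =>
    have hstep : c + (u + 1) • a l = (c + u • a l) + a l := by
      rw [succ_nsmul, add_assoc]
    have hb' : (c + (u + 1) • a l) ∈ S := by
      rw [hstep]; exact S.add_mem ih.1 (ha l)
    refine ⟨hb', fun m hm hex => ?_⟩
    -- l has no edges in T_{b'}
    have hnoedge : ∀ j, ¬ isEdge S a (c + (u + 1) • a l) l j := by
      rintro j ⟨hlj, t, ht, heq⟩
      have : c + u • a l = a j + t := by
        rw [hstep] at heq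
        funext x
        have h := congrFun heq x
        simp only [Pi.add_apply] at h ⊢
        omega
      exact ih.2 j (Ne.symm hlj) ⟨t, ht, this⟩
    have hvl : isVertex S a (c + (u + 1) • a l) l :=
      ⟨c + u • a l, ih.1, by rw [hstep]; abel⟩
    obtain ⟨s, hs, heq⟩ := hex
    have hdisc : TbDisconnected S a (c + (u + 1) • a l) := by
      refine ⟨l, m, hvl, ⟨s, hs, heq⟩, fun hpath => ?_⟩
      rcases Relation.ReflTransGen.cases_head hpath with h | ⟨j, hj, _⟩
      · exact hm h.symm
      · exact hnoedge j hj
    exact hno _ hb' hdisc ⟨l, hvl, hnoedge⟩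
end

section
/- Let S be a simplicial affine semigroup in ℕ^d with extremal rays E = {a_1,...,a_d}. If there exists b ∈ S such that the complex T_b is disconnected and has an isolated vertex a_l, then for the permutation with E' = E \ {a_l}, we have b ∉ Ap(S, E') and b - a_l ∈ Ap(S, E'); consequently Ap(S, E \ {a_l}) has a ⪯_S-maximal element. -/
/-- if `T_b` is disconnected with an isolated vertex `a_l`, then for
`E' = E \ {a_l}` one has `b ∉ Ap(S, E')` and `b - a_l ∈ Ap(S, E')`; consequently
`Ap(S, E \ {a_l})` has a `⪯_S`-maximal element. -/
theorem apery_maximal_of_isolated_vertex {d : ℕ} (S : AddSubmonoid (Fin d → ℕ))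
    (a : Fin d → (Fin d → ℕ)) (ha : ∀ i, a i ∈ S)
    (hE : LinearIndependent ℚ (fun i : Fin d => (fun t => (a i t : ℚ))))
    (hFin : (aperyIdx S a Finset.univ).Finite)
    (b : Fin d → ℕ) (hb : b ∈ S) (hdisc : TbDisconnected S a b)
    (l : Fin d) (hiso : isIsolated S a b l) :
    b ∉ aperyIdx S a {l}ᶜ ∧
    (∃ c ∈ aperyIdx S a {l}ᶜ, b = a l + c) ∧
    (∃ m ∈ aperyIdx S a {l}ᶜ, ∀ x ∈ aperyIdx S a {l}ᶜ, semigroupLE S m x → x = m) := by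
  classical
  obtain ⟨⟨c, hcS, hbc⟩, hnoedge⟩ := hiso
  obtain ⟨i, j, hvi, hvj, hnconn⟩ := hdisc
  have hmem : ∀ i : Fin d, i ∈ ({l}ᶜ : Finset (Fin d)) ↔ i ≠ l := by
    intro i; simp
  obtain ⟨i0, hi0l, s0, hs0S, hbs0⟩ : ∃ i0, i0 ≠ l ∧ ∃ s ∈ S, b = a i0 + s := by
    rcases eq_or_ne i l with hil | hil
    · rcases eq_or_ne j l with hjl | hjl
      · exfalso; apply hnconn; rw [hil, hjl]
      · exact ⟨j, hjl, hvj⟩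
    · exact ⟨i, hil, hvi⟩
  obtain ⟨t0, ht0⟩ : ∃ t0, a l t0 ≠ 0 := by
    by_contra hc
    push_neg at hc
    exact hE.ne_zero l (by funext t; simp [hc t])
  have hcap : c ∈ aperyIdx S a {l}ᶜ := by
    refine ⟨hcS, ?_⟩
    rintro i hi ⟨t, htS, hct⟩
    exact hnoedge i ⟨fun h => (hmem i).1 hi h.symm, t, htS, by rw [hbc, hct, add_assoc]⟩
  have g1 : b ∉ aperyIdx S a {l}ᶜ := fun hbap => hbap.2 i0 ((hmem i0).2 hi0l) ⟨s0, hs0S, hbs0⟩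
  refine ⟨g1, ⟨c, hcap, hbc⟩, ?_⟩
  by_contra hno
  push_neg at hno
  choose F hFmem hFle hFne using hno
  let T := {x : Fin d → ℕ // x ∈ aperyIdx S a {l}ᶜ}
  let g : ℕ → T := fun n => Nat.rec ⟨c, hcap⟩ (fun _ p => ⟨F p.1 p.2, hFmem p.1 p.2⟩) n
  have hgsucc : ∀ n, (g (n+1)).1 = F (g n).1 (g n).2 := fun n => rfl
  have htrans : ∀ {x y z : Fin d → ℕ}, semigroupLE S x y → semigroupLE S y z →
      semigroupLE S x z := by
    rintro x y z ⟨s, hs, rfl⟩ ⟨t, ht, rfl⟩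
    exact ⟨s + t, S.add_mem hs ht, add_assoc _ _ _⟩
  have hchain : ∀ m n, m ≤ n → semigroupLE S (g m).1 (g n).1 := by
    intro m n hmn
    induction n, hmn using Nat.le_induction with
    | base => exact ⟨0, S.zero_mem, (add_zero _).symm⟩
    | succ n hmn ih =>
      exact htrans ih (show semigroupLE S (g n).1 (g (n+1)).1 by
        rw [hgsucc]; exact hFle _ _)
  have hanti : ∀ x y : Fin d → ℕ, semigroupLE S x y → semigroupLE S y x → x = y := by
    rintro x y ⟨s, hs, rfl⟩ ⟨t, ht, hxt⟩
    funext u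
    have h1 := congrFun hxt u
    simp only [Pi.add_apply] at h1 ⊢
    omega
  have hne : ∀ m n, m < n → (g m).1 ≠ (g n).1 := by
    intro m n hmn heq
    have h1 : semigroupLE S (g m).1 (g (m+1)).1 := by rw [hgsucc]; exact hFle _ _
    have h2 : semigroupLE S (g (m+1)).1 (g n).1 := hchain _ _ hmn
    have h3 : semigroupLE S (g (m+1)).1 (g m).1 := by rw [heq]; exact h2
    have h4 := hanti _ _ h1 h3
    exact hFne (g m).1 (g m).2 (by rw [← hgsucc]; exact h4.symm)
  have decomp : ∀ n : ℕ, ∃ w, ∃ k : ℕ, w ∈ aperyIdx S a Finset.univ ∧ (g n).1 = k • a l + w := by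
    intro n
    obtain ⟨hxS, hxap⟩ := (g n).2
    set x := (g n).1 with hxdef
    set P : ℕ → Prop := fun m => ∃ t ∈ S, x = m • a l + t with hPdef
    have hbd : ∀ m, P m → m ≤ x t0 := by
      rintro m ⟨t, htS, hxt⟩
      have h1 := congrFun hxt t0
      simp only [Pi.add_apply, Pi.smul_apply, smul_eq_mul] at h1
      have h2 : m * 1 ≤ m * a l t0 := Nat.mul_le_mul_left m (Nat.one_le_iff_ne_zero.2 ht0)
      omega
    have hP0 : P 0 := ⟨x, hxS, by simp⟩
    set k := Nat.findGreatest P (x t0) with hkdef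
    have hPk : P k := Nat.findGreatest_spec (Nat.zero_le _) hP0
    obtain ⟨w, hwS, hxw⟩ := hPk
    refine ⟨w, k, ⟨hwS, ?_⟩, hxw⟩
    rintro i - ⟨t, htS, hwt⟩
    rcases eq_or_ne i l with rfl | hil
    · have hPk1 : P (k + 1) := ⟨t, htS, by rw [hxw, hwt, succ_nsmul, add_assoc]⟩
      exact Nat.findGreatest_is_greatest (Nat.lt_succ_self k) (hbd _ hPk1) hPk1
    · exact hxap i ((hmem i).2 hil)
        ⟨k • a l + t, S.add_mem (S.nsmul_mem (ha l) k) htS,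
          by rw [hxw, hwt]; exact add_left_comm _ _ _⟩
  choose W K hWmem hgW using decomp
  obtain ⟨m, n, hmn, hWeq⟩ : ∃ m n, m < n ∧ W m = W n := by
    obtain ⟨m, -, n, -, hmn, hWeq⟩ :=
      Set.infinite_univ.exists_ne_map_eq_of_mapsTo (f := W)
        (fun n _ => hWmem n) hFin
    rcases hmn.lt_or_gt with h | h
    · exact ⟨m, n, h, hWeq⟩
    · exact ⟨n, m, h, hWeq.symm⟩
  obtain ⟨s, hsS, hgs⟩ := hchain m n (le_of_lt hmn)
  have hcancel : K n • a l = K m • a l + s := by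
    have h1 : (g n).1 = K m • a l + s + W n := by
      rw [hgs, hgW m, hWeq]; exact add_right_comm _ _ _
    exact add_right_cancel ((hgW n).symm.trans h1)
  have hKle : K m ≤ K n := by
    have h1 := congrFun hcancel t0
    simp only [Pi.add_apply, Pi.smul_apply, smul_eq_mul] at h1
    have h2 : K m * a l t0 ≤ K n * a l t0 := by omega
    exact Nat.le_of_mul_le_mul_right h2 (Nat.pos_of_ne_zero ht0)
  have hs_eq : s = (K n - K m) • a l := by
    have h1 : K m • a l + (K n - K m) • a l = K m • a l + s := by
      rw [← add_nsmul, Nat.add_sub_cancel' hKle, hcancel]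
    exact (add_left_cancel h1).symm
  obtain ⟨k', hk'⟩ : ∃ k', K n - K m = k' + 1 := by
    rcases Nat.eq_zero_or_pos (K n - K m) with h | h
    · exfalso
      have hs0 : s = 0 := by rw [hs_eq, h, zero_nsmul]
      exact hne m n hmn (by rw [hgs, hs0, add_zero])
    · exact ⟨K n - K m - 1, by omega⟩
  obtain ⟨sm, hsmS, hgm⟩ := hchain 0 m (Nat.zero_le m)
  have hg0 : (g 0).1 = c := rfl
  rw [hg0] at hgm
  apply (g n).2.2 i0 ((hmem i0).2 hi0l)
  refine ⟨s0 + (sm + k' • a l),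
    S.add_mem hs0S (S.add_mem hsmS (S.nsmul_mem (ha l) k')), ?_⟩
  rw [hgs, hgm, hs_eq, hk', succ_nsmul]
  funext u
  have h1 := congrFun hbc u
  have h2 := congrFun hbs0 u
  simp only [Pi.add_apply] at h1 h2 ⊢
  omega
end
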